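/- A monic Weierstrass polynomial f ∈ K[[x_1,…,x_n]][y] of degree d has an orthant associated polyhedron if and only if its Newton polyhedron Δ(f) ⊂ ℝ_{≥0}^{n+1} has a loose edge with endpoint (0,…,0,d). -/

import Mathlib

open Finset

def dotp {n : ℕ} (ξ a : Fin n → ℝ) : ℝ := ∑ i, ξ i * a i

def IsNewtonPolyhedron {n : ℕ} (Δ : Set (Fin n → ℝ)) : Prop :=
  ∃ S : Finset (Fin n → ℝ), S.Nonempty ∧ (∀ a ∈ S, ∀ i, ∃ m : ℕ, a i = (m : ℝ)) ∧
    Δ = {x | ∃ y ∈ convexHull ℝ (S : Set (Fin n → ℝ)),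
          ∃ z : Fin n → ℝ, (∀ i, 0 ≤ z i) ∧ x = y + z}

def NPface {n : ℕ} (Δ : Set (Fin n → ℝ)) (ξ : Fin n → ℝ) : Set (Fin n → ℝ) :=
  {a ∈ Δ | ∀ b ∈ Δ, dotp ξ a ≤ dotp ξ b}

def IsFaceOf {n : ℕ} (Δ A : Set (Fin n → ℝ)) : Prop :=
  ∃ ξ : Fin n → ℝ, (∀ i, 0 ≤ ξ i) ∧ A = NPface Δ ξ

noncomputable def npDim {n : ℕ} (A : Set (Fin n → ℝ)) : ℕ :=
  Module.finrank ℝ (vectorSpan ℝ A)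

def IsLooseEdge {n : ℕ} (Δ E : Set (Fin n → ℝ)) : Prop :=
  IsFaceOf Δ E ∧ IsCompact E ∧ npDim E = 1 ∧
    ∀ F, IsFaceOf Δ F → IsCompact F → 2 ≤ npDim F → ¬ E ⊆ F

/-- The exponent `(α, j)` of a monomial `x^α y^j`, as a point of `ℝ^{n+1}`. -/
def embed2 {n : ℕ} (α : Fin n →₀ ℕ) (j : ℕ) : Fin (n+1) → ℝ :=
  fun i => if h : (i : ℕ) < n then (α ⟨i, h⟩ : ℝ) else (j : ℝ)

/-- Newton polyhedron of `f ∈ K[[x_1,…,x_n]][y]`, in `ℝ_{≥0}^{n+1}`. -/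
def npOfPoly {K : Type*} [Field K] {n : ℕ} (f : Polynomial (MvPowerSeries (Fin n) K)) :
    Set (Fin (n+1) → ℝ) :=
  {x | ∃ y ∈ convexHull ℝ {p : Fin (n+1) → ℝ | ∃ (j : ℕ) (α : Fin n →₀ ℕ),
        MvPowerSeries.coeff α (f.coeff j) ≠ 0 ∧ p = embed2 α j},
     ∃ z : Fin (n+1) → ℝ, (∀ i, 0 ≤ z i) ∧ x = y + z}

/-- A descendant segment in `ℝ^{n+1}`. -/
def IsDescendantSeg {n : ℕ} (E : Set (Fin (n+1) → ℝ)) : Prop :=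
  ∃ c : Fin (n+1) → ℝ, (∀ i : Fin (n+1), (i : ℕ) < n → 0 ≤ c i) ∧ c (Fin.last n) < 0 ∧
    ∃ a b, a ≠ b ∧ E = segment ℝ a b ∧ ∃ t : ℝ, b - a = t • c

open Classical in
/-- `G ∈ K[X][y]` is the symbolic restriction of `f ∈ K[[x]][y]` to `A`. -/
def SymbRestrictPoly {K : Type*} [Field K] {n : ℕ}
    (f : Polynomial (MvPowerSeries (Fin n) K)) (A : Set (Fin (n+1) → ℝ))
    (G : Polynomial (MvPolynomial (Fin n) K)) : Prop :=
  ∀ (j : ℕ) (α : Fin n →₀ ℕ), MvPolynomial.coeff α (G.coeff j) =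
    if embed2 α j ∈ A then MvPowerSeries.coeff α (f.coeff j) else 0

def IsVertexOf {n : ℕ} (Δ : Set (Fin n → ℝ)) (v : Fin n → ℝ) : Prop :=
  ∃ ξ : Fin n → ℝ, (∀ i, 0 ≤ ξ i) ∧ NPface Δ ξ = {v}


section Aux

variable {k : ℕ}

def hullP (S : Set (Fin k → ℝ)) : Set (Fin k → ℝ) :=
  {x | ∃ y ∈ convexHull ℝ S, ∃ z : Fin k → ℝ, (∀ i, 0 ≤ z i) ∧ x = y + z}

theorem dotp_add (ξ a b : Fin k → ℝ) : dotp ξ (a + b) = dotp ξ a + dotp ξ b := by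
  simp [dotp, mul_add, Finset.sum_add_distrib]

theorem dotp_smul (ξ : Fin k → ℝ) (c : ℝ) (a : Fin k → ℝ) :
    dotp ξ (c • a) = c * dotp ξ a := by
  rw [dotp, dotp, Finset.mul_sum]
  refine Finset.sum_congr rfl fun i _ => ?_
  simp [mul_comm, mul_left_comm]

theorem dotp_sub (ξ a b : Fin k → ℝ) : dotp ξ (a - b) = dotp ξ a - dotp ξ b := by
  simp [dotp, mul_sub, Finset.sum_sub_distrib]

theorem dotp_nonneg {ξ a : Fin k → ℝ} (hξ : ∀ i, 0 ≤ ξ i) (ha : ∀ i, 0 ≤ a i) :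
    0 ≤ dotp ξ a :=
  Finset.sum_nonneg fun i _ => mul_nonneg (hξ i) (ha i)

theorem dotp_mono {ξ a b : Fin k → ℝ} (hξ : ∀ i, 0 ≤ ξ i) (hab : ∀ i, a i ≤ b i) :
    dotp ξ a ≤ dotp ξ b :=
  Finset.sum_le_sum fun i _ => mul_le_mul_of_nonneg_left (hab i) (hξ i)

theorem dotp_single (ξ : Fin k → ℝ) (i0 : Fin k) (c : ℝ) :
    dotp ξ (Pi.single i0 c) = ξ i0 * c := by
  rw [dotp]
  rw [Finset.sum_eq_single i0]
  · simp
  · intro b _ hb; simp [Pi.single_apply, hb]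
  · simp

/-- if `ξ, a ≥ 0` and `dotp ξ a = 0` with `ξ` strictly positive then `a = 0`. -/
theorem eq_zero_of_dotp_eq_zero {ξ a : Fin k → ℝ} (hξ : ∀ i, 0 < ξ i)
    (ha : ∀ i, 0 ≤ a i) (h : dotp ξ a = 0) : a = 0 := by
  have h0 : ∀ i ∈ Finset.univ, ξ i * a i = 0 := by
    rw [← Finset.sum_eq_zero_iff_of_nonneg
      (fun i _ => mul_nonneg (hξ i).le (ha i))]
    exact h
  funext i
  have := h0 i (Finset.mem_univ i)
  have := (hξ i).ne'
  have : a i = 0 := by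
    rcases mul_eq_zero.1 (h0 i (Finset.mem_univ i)) with h' | h'
    · exact absurd h' (hξ i).ne'
    · exact h'
  simpa using this

theorem mem_hullP_of_mem {S : Set (Fin k → ℝ)} {s : Fin k → ℝ} (hs : s ∈ S) :
    s ∈ hullP S :=
  ⟨s, subset_convexHull ℝ S hs, 0, fun _ => le_refl 0, by simp⟩

theorem hullP_nonempty_iff {S : Set (Fin k → ℝ)} : (hullP S).Nonempty ↔ S.Nonempty := by
  constructor
  · rintro ⟨x, y, hy, -⟩
    exact convexHull_nonempty_iff.1 ⟨y, hy⟩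
  · rintro ⟨s, hs⟩; exact ⟨s, mem_hullP_of_mem hs⟩

/-- H3: minimum principle over `hullP`. -/
theorem le_dotp_of_mem_hullP {S : Set (Fin k → ℝ)} {ξ : Fin k → ℝ} {m : ℝ}
    (hξ : ∀ i, 0 ≤ ξ i) (hm : ∀ s ∈ S, m ≤ dotp ξ s) {x : Fin k → ℝ}
    (hx : x ∈ hullP S) : m ≤ dotp ξ x := by
  obtain ⟨y, hy, z, hz, rfl⟩ := hx
  have hconv : Convex ℝ {w : Fin k → ℝ | m ≤ dotp ξ w} := by
    intro a ha b hb s t hs ht hst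
    simp only [Set.mem_setOf_eq] at *
    have : dotp ξ (s • a + t • b) = s * dotp ξ a + t * dotp ξ b := by
      rw [dotp_add, dotp_smul, dotp_smul]
    rw [this]
    have h1 : s * m ≤ s * dotp ξ a := mul_le_mul_of_nonneg_left ha hs
    have h2 : t * m ≤ t * dotp ξ b := mul_le_mul_of_nonneg_left hb ht
    have h3 : s * m + t * m = m := by rw [← add_mul, hst, one_mul]
    linarith
  have hy' : m ≤ dotp ξ y := convexHull_min hm hconv hy
  have : 0 ≤ dotp ξ z := dotp_nonneg hξ hz
  rw [dotp_add]; linarith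

/-- The coordinatewise upper set of `v` is convex. -/
theorem convex_upperset (v : Fin k → ℝ) : Convex ℝ {w : Fin k → ℝ | ∀ i, v i ≤ w i} := by
  intro a ha b hb s t hs ht hst i
  simp only [Set.mem_setOf_eq] at *
  have := ha i; have := hb i
  have : s * v i + t * v i ≤ s * a i + t * b i := by nlinarith
  calc v i = s * v i + t * v i := by rw [← add_mul, hst, one_mul]
  _ ≤ s * a i + t * b i := this
  _ = (s • a + t • b) i := by simp

theorem hullP_subset_upperset {S : Set (Fin k → ℝ)} {v : Fin k → ℝ}
    (h : ∀ q ∈ S, ∀ i, v i ≤ q i) {x : Fin k → ℝ} (hx : x ∈ hullP S) :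
    ∀ i, v i ≤ x i := by
  obtain ⟨y, hy, z, hz, rfl⟩ := hx
  have hy' := convexHull_min h (convex_upperset v) hy
  intro i
  have := hy' i
  have := hz i
  simp only [Pi.add_apply]
  linarith

end Aux
section Aux2

variable {k : ℕ}

/-- `dotp ξ` as a linear map. -/
def dotL (ξ : Fin k → ℝ) : (Fin k → ℝ) →ₗ[ℝ] ℝ where
  toFun := dotp ξ
  map_add' := dotp_add ξ
  map_smul' := fun c a => by simp [dotp_smul, smul_eq_mul]

@[simp] theorem dotL_apply (ξ a : Fin k → ℝ) : dotL ξ a = dotp ξ a := rfl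

/-- H4a: equality case of the minimum principle on a convex hull. -/
theorem mem_convexHull_argmin {S : Set (Fin k → ℝ)} {ξ : Fin k → ℝ} {m : ℝ}
    (hm : ∀ s ∈ S, m ≤ dotp ξ s) {y : Fin k → ℝ}
    (hy : y ∈ convexHull ℝ S) (heq : dotp ξ y = m) :
    y ∈ convexHull ℝ {s ∈ S | dotp ξ s = m} := by
  rw [_root_.convexHull_eq] at hy
  obtain ⟨ι, t, w, z, hw, hws, hz, hcm⟩ := hy
  classical
  have hy' : y = ∑ i ∈ t, w i • z i := by
    rw [← hcm, Finset.centerMass_eq_of_sum_1 _ _ hws]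
  have hdy : dotp ξ y = ∑ i ∈ t, w i * dotp ξ (z i) := by
    rw [hy', ← dotL_apply, map_sum]
    refine Finset.sum_congr rfl fun i hi => ?_
    simp [dotp_smul]
  have hterm : ∀ i ∈ t, w i * (dotp ξ (z i) - m) = 0 := by
    rw [← Finset.sum_eq_zero_iff_of_nonneg]
    · have hsplit : ∑ i ∈ t, w i * (dotp ξ (z i) - m)
          = (∑ i ∈ t, w i * dotp ξ (z i)) - (∑ i ∈ t, w i * m) := by
        rw [← Finset.sum_sub_distrib]
        exact Finset.sum_congr rfl fun i _ => by ring
      rw [hsplit, ← Finset.sum_mul, hws, one_mul, ← hdy, heq, sub_self]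
    · intro i hi
      exact mul_nonneg (hw i hi) (by linarith [hm (z i) (hz i hi)])
  have key : (t.filter (fun i => w i ≠ 0)).centerMass w z
      ∈ convexHull ℝ {s ∈ S | dotp ξ s = m} := by
    refine Finset.centerMass_mem_convexHull _ (fun i hi => hw i (Finset.mem_filter.1 hi).1)
      ?_ (fun i hi => ?_)
    · rw [Finset.sum_filter_ne_zero, hws]; norm_num
    · obtain ⟨hit, hwi⟩ := Finset.mem_filter.1 hi
      refine ⟨hz i hit, ?_⟩
      have := hterm i hit
      rcases mul_eq_zero.1 this with h | h
      · exact absurd h hwi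
      · linarith
  rw [Finset.centerMass_filter_ne_zero, hcm] at key
  exact key

/-- H4: description of a face cut out by a strictly positive functional with attained minimum. -/
theorem NPface_hullP_eq {S : Set (Fin k → ℝ)} {ξ : Fin k → ℝ} {m : ℝ}
    (hξ : ∀ i, 0 < ξ i) (hm : ∀ s ∈ S, m ≤ dotp ξ s)
    (hA : ∃ s ∈ S, dotp ξ s = m) :
    NPface (hullP S) ξ = convexHull ℝ {s ∈ S | dotp ξ s = m} := by
  obtain ⟨s0, hs0S, hs0⟩ := hA
  have hξ0 : ∀ i, 0 ≤ ξ i := fun i => (hξ i).le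
  apply Set.Subset.antisymm
  · rintro x ⟨hxΔ, hxmin⟩
    have hxm : dotp ξ x = m := by
      have h1 : dotp ξ x ≤ m := by
        have := hxmin s0 (mem_hullP_of_mem hs0S)
        rwa [hs0] at this
      have h2 : m ≤ dotp ξ x := le_dotp_of_mem_hullP hξ0 hm hxΔ
      linarith
    obtain ⟨y, hy, z, hz, rfl⟩ := hxΔ
    have hym : m ≤ dotp ξ y :=
      le_dotp_of_mem_hullP hξ0 hm ⟨y, hy, 0, fun _ => le_refl 0, by simp⟩
    have hzd : 0 ≤ dotp ξ z := dotp_nonneg hξ0 hz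
    rw [dotp_add] at hxm
    have hz0 : z = 0 := eq_zero_of_dotp_eq_zero hξ hz (by linarith)
    rw [hz0, add_zero]
    exact mem_convexHull_argmin hm hy (by linarith)
  · intro x hx
    have hxS : x ∈ convexHull ℝ S :=
      convexHull_mono (fun s hs => hs.1) hx
    have hxm : dotp ξ x = m := by
      have h1 : m ≤ dotp ξ x :=
        le_dotp_of_mem_hullP hξ0 hm ⟨x, hxS, 0, fun _ => le_refl 0, by simp⟩
      have h2 : dotp ξ x ≤ m := by
        have hconv : Convex ℝ {w : Fin k → ℝ | dotp ξ w ≤ m} := by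
          intro a ha b hb s t hs ht hst
          simp only [Set.mem_setOf_eq] at *
          have he : dotp ξ (s • a + t • b) = s * dotp ξ a + t * dotp ξ b := by
            rw [dotp_add, dotp_smul, dotp_smul]
          rw [he]
          have h1' : s * dotp ξ a ≤ s * m := mul_le_mul_of_nonneg_left ha hs
          have h2' : t * dotp ξ b ≤ t * m := mul_le_mul_of_nonneg_left hb ht
          have h3 : s * m + t * m = m := by rw [← add_mul, hst, one_mul]
          linarith
        exact convexHull_min (fun s hs => le_of_eq hs.2) hconv hx
      linarith
    refine ⟨⟨x, hxS, 0, fun _ => le_refl 0, by simp⟩, fun b hb => ?_⟩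
    rw [hxm]
    exact le_dotp_of_mem_hullP hξ0 hm hb

end Aux2
section Aux3

variable {k : ℕ}

/-- H5: a nonempty face cut out by a functional with a zero coordinate is not compact. -/
theorem NPface_not_compact {S : Set (Fin k → ℝ)} {ξ : Fin k → ℝ}
    (hξ : ∀ i, 0 ≤ ξ i) {i0 : Fin k} (h0 : ξ i0 = 0)
    {x0 : Fin k → ℝ} (hx0 : x0 ∈ NPface (hullP S) ξ) :
    ¬ IsCompact (NPface (hullP S) ξ) := by
  intro hc
  have hray : ∀ t : ℝ, 0 ≤ t → x0 + Pi.single i0 t ∈ NPface (hullP S) ξ := by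
    intro t ht
    obtain ⟨⟨y, hy, z, hz, rfl⟩, hmin⟩ := hx0
    constructor
    · refine ⟨y, hy, z + Pi.single i0 t, fun i => ?_, by abel⟩
      by_cases hi : i = i0
      · subst hi; simpa using add_nonneg (hz i) ht
      · simpa [Pi.single_apply, hi] using hz i
    · intro b hb
      have : dotp ξ (y + z + Pi.single i0 t) = dotp ξ (y + z) := by
        rw [dotp_add, dotp_single, h0]; ring
      rw [this]
      exact hmin b hb
  -- the image of the face under evaluation at i0 is compact, hence bounded above
  have himg : IsCompact ((fun x : Fin k → ℝ => x i0) '' NPface (hullP S) ξ) :=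
    hc.image (continuous_apply i0)
  obtain ⟨C, hC⟩ := himg.bddAbove
  have h1 := hC (Set.mem_image_of_mem _ (hray (max 0 (C - x0 i0 + 1)) (le_max_left _ _)))
  simp only [Pi.add_apply, Pi.single_eq_same] at h1
  have h2 : C - x0 i0 + 1 ≤ max 0 (C - x0 i0 + 1) := le_max_right _ _
  linarith

/-- Discreteness: a bounded-below-by-dotp slice of a `1/N`-integral set is finite. -/
theorem finite_bdd {S : Set (Fin k → ℝ)} {N : ℕ} (hN : 0 < N)
    (hdisc : ∀ s ∈ S, ∀ i, ∃ m : ℕ, s i = (m : ℝ) / N)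
    {ξ : Fin k → ℝ} (hξ : ∀ i, 0 < ξ i) (C : ℝ) :
    {s ∈ S | dotp ξ s ≤ C}.Finite := by
  classical
  set T := {s ∈ S | dotp ξ s ≤ C}
  -- coordinates of elements of T are nonneg
  have hnn : ∀ s ∈ S, ∀ i, 0 ≤ s i := by
    intro s hs i
    obtain ⟨m, hm⟩ := hdisc s hs i
    rw [hm]; positivity
  -- bound on each coordinate
  have hbd : ∀ s ∈ T, ∀ i, s i ≤ C / ξ i := by
    rintro s ⟨hsS, hsC⟩ i
    have h1 : ξ i * s i ≤ dotp ξ s := by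
      show ξ i * s i ≤ ∑ j, ξ j * s j
      exact Finset.single_le_sum (fun j _ => mul_nonneg (hξ j).le (hnn s hsS j))
        (Finset.mem_univ i)
    rw [le_div_iff₀ (hξ i)]
    calc s i * ξ i = ξ i * s i := by ring
    _ ≤ dotp ξ s := h1
    _ ≤ C := hsC
  -- embed T into the image of a finite set
  set M : Fin k → ℕ := fun i => Nat.floor ((N : ℝ) * (C / ξ i))
  have hsub : T ⊆ (fun g : Fin k → ℕ => fun i => (g i : ℝ) / N) ''
      (Set.univ.pi fun i => Set.Iic (M i)) := by
    intro s hs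
    choose g hg using hdisc s hs.1
    refine ⟨g, ?_, ?_⟩
    · intro i _
      simp only [Set.mem_Iic, M]
      apply Nat.le_floor
      have h1 := hbd s hs i
      rw [hg i] at h1
      rw [div_le_iff₀ (by positivity : (0:ℝ) < (N:ℝ))] at h1
      calc (g i : ℝ) ≤ C / ξ i * N := h1
      _ = (N : ℝ) * (C / ξ i) := by ring
    · funext i; exact (hg i).symm
  exact Set.Finite.subset (Set.Finite.image _ (Set.Finite.pi fun i => Set.finite_Iic _)) hsub

/-- From discreteness: minimum attained, with finite argmin. -/
theorem exists_min_discrete {S : Set (Fin k → ℝ)} {N : ℕ} (hN : 0 < N)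
    (hdisc : ∀ s ∈ S, ∀ i, ∃ m : ℕ, s i = (m : ℝ) / N)
    {ξ : Fin k → ℝ} (hξ : ∀ i, 0 < ξ i) (hne : S.Nonempty) :
    ∃ m : ℝ, (∃ s ∈ S, dotp ξ s = m) ∧ (∀ s ∈ S, m ≤ dotp ξ s) ∧
      {s ∈ S | dotp ξ s = m}.Finite := by
  obtain ⟨s0, hs0⟩ := hne
  have hT : {s ∈ S | dotp ξ s ≤ dotp ξ s0}.Finite := finite_bdd hN hdisc hξ _
  have hTne : {s ∈ S | dotp ξ s ≤ dotp ξ s0}.Nonempty := ⟨s0, hs0, le_refl _⟩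
  obtain ⟨smin, hsmin, hminT⟩ := Set.exists_min_image _ (dotp ξ) hT hTne
  refine ⟨dotp ξ smin, ⟨smin, hsmin.1, rfl⟩, ?_, ?_⟩
  · intro s hs
    by_cases h : dotp ξ s ≤ dotp ξ s0
    · exact hminT s ⟨hs, h⟩
    · push_neg at h
      have := hminT s0 ⟨hs0, le_refl _⟩
      linarith
  · apply Set.Finite.subset hT
    rintro s ⟨hsS, hseq⟩
    exact ⟨hsS, by rw [hseq]; exact hsmin.2⟩

end Aux3
section Aux4

variable {k : ℕ}

theorem dotp_eval_perturb (ξ' : Fin k → ℝ) (i0 : Fin k) (s : ℝ) (r : Fin k → ℝ) :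
    dotp (fun j => (1-s) * ξ' j + s * (if j = i0 then (1:ℝ) else 0)) r
      = (1-s) * dotp ξ' r + s * r i0 := by
  unfold dotp
  simp only [add_mul]
  rw [Finset.sum_add_distrib]
  congr 1
  · rw [Finset.mul_sum]
    exact Finset.sum_congr rfl fun j _ => by ring
  · rw [Finset.sum_eq_single i0]
    · simp
    · intro b _ hb; simp [hb]
    · simp

theorem dotp_eval_single_perturb (ζ : Fin k → ℝ) (i0 : Fin k) (ε : ℝ) (r : Fin k → ℝ) :
    dotp (fun j => ζ j + ε * (if j = i0 then (1:ℝ) else 0)) r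
      = dotp ζ r + ε * r i0 := by
  unfold dotp
  simp only [add_mul]
  rw [Finset.sum_add_distrib]
  congr 1
  rw [Finset.sum_eq_single i0]
  · simp
  · intro b _ hb; simp [hb]
  · simp

/-- VERTEXFIND auxiliary induction. -/
theorem vertexfind_aux {Q : Set (Fin k → ℝ)} {N : ℕ} (hN : 0 < N)
    (hdisc : ∀ q ∈ Q, ∀ i, ∃ m : ℕ, q i = (m : ℝ) / N) :
    ∀ c : ℕ, ∀ ζ : Fin k → ℝ, (∀ i, 0 < ζ i) → ∀ m : ℝ,
      (∃ q ∈ Q, dotp ζ q = m) → (∀ q ∈ Q, m ≤ dotp ζ q) →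
      ∀ hfin : {q ∈ Q | dotp ζ q = m}.Finite, hfin.toFinset.card ≤ c →
      ∃ u ∈ Q, dotp ζ u = m ∧ ∃ ζ₂ : Fin k → ℝ, (∀ i, 0 < ζ₂ i) ∧
        (∀ q ∈ Q, dotp ζ₂ u ≤ dotp ζ₂ q) ∧ (∀ q ∈ Q, dotp ζ₂ q = dotp ζ₂ u → q = u) := by
  classical
  have hnn : ∀ q ∈ Q, ∀ i, 0 ≤ q i := by
    intro q hq i
    obtain ⟨m, hm⟩ := hdisc q hq i
    rw [hm]; positivity
  intro c
  induction c with
  | zero =>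
    intro ζ hζ m hex hmin hfin hcard
    obtain ⟨q, hqQ, hqm⟩ := hex
    have : q ∈ hfin.toFinset := by rw [Set.Finite.mem_toFinset]; exact ⟨hqQ, hqm⟩
    have := Finset.card_pos.2 ⟨q, this⟩
    omega
  | succ c ih =>
    intro ζ hζ m hex hmin hfin hcard
    obtain ⟨q00, hq00Q, hq00m⟩ := hex
    set B := {q ∈ Q | dotp ζ q = m} with hB
    by_cases hsing : ∀ q1 ∈ B, ∀ q2 ∈ B, q1 = q2
    · refine ⟨q00, hq00Q, hq00m, ζ, hζ, ?_, ?_⟩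
      · intro q hq; rw [hq00m]; exact hmin q hq
      · intro q hq heq
        rw [hq00m] at heq
        exact hsing q ⟨hq, heq⟩ q00 ⟨hq00Q, hq00m⟩
    · push_neg at hsing
      obtain ⟨q1, hq1, q2, hq2, hq12⟩ := hsing
      have : ∃ i0 : Fin k, q1 i0 ≠ q2 i0 := by
        by_contra h
        push_neg at h
        exact hq12 (funext h)
      obtain ⟨i0, hi0⟩ := this
      -- minimal i0-coordinate over B
      obtain ⟨qβ, hqβB, hqβmin⟩ := Set.exists_min_image B (fun q => q i0) hfin ⟨q1, hq1⟩
      set β := qβ i0 with hβ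
      have hβ0 : 0 ≤ β := hnn qβ hqβB.1 i0
      -- gap δ
      set R := {q ∈ Q | dotp ζ q ≤ m + β + 1} with hR
      have hRfin : R.Finite := finite_bdd hN hdisc hζ _
      have hδ : ∃ δ : ℝ, 0 < δ ∧ δ ≤ 1 ∧ ∀ q ∈ R, q ∉ B → m + δ ≤ dotp ζ q := by
        by_cases hRB : (R \ B).Nonempty
        · obtain ⟨r0, hr0, hr0min⟩ :=
            Set.exists_min_image (R \ B) (dotp ζ) (hRfin.subset Set.diff_subset) hRB
          have h1 : m < dotp ζ r0 := by
            rcases lt_or_eq_of_le (hmin r0 hr0.1.1) with h | h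
            · exact h
            · exact absurd ⟨hr0.1.1, h.symm⟩ hr0.2
          refine ⟨min (dotp ζ r0 - m) 1, by simp [h1], min_le_right _ _, ?_⟩
          intro q hqR hqB
          have := hr0min q ⟨hqR, hqB⟩
          have := min_le_left (dotp ζ r0 - m) 1
          linarith
        · refine ⟨1, one_pos, le_refl _, ?_⟩
          intro q hqR hqB
          exact absurd ⟨q, hqR, hqB⟩ hRB
      obtain ⟨δ, hδ0, hδ1, hδgap⟩ := hδ
      set ε := δ / (2 * (β + 1)) with hε
      have hε0 : 0 < ε := by positivity
      set ζ' := fun j => ζ j + ε * (if j = i0 then (1:ℝ) else 0) with hζ'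
      have hζ'pos : ∀ i, 0 < ζ' i := by
        intro i
        have : (0:ℝ) ≤ ε * (if i = i0 then (1:ℝ) else 0) := by
          by_cases h : i = i0 <;> simp [h, hε0.le]
        have := hζ i
        simp only [hζ']
        linarith
      have heval : ∀ r, dotp ζ' r = dotp ζ r + ε * r i0 :=
        dotp_eval_single_perturb ζ i0 ε
      set m' := m + ε * β with hm'
      -- εβ bounds
      have hεβδ : ε * β < δ := by
        rw [hε]
        rw [div_mul_eq_mul_div, div_lt_iff₀ (by positivity)]
        nlinarith
      have hεβ1 : ε * β ≤ β + 1 := by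
        rw [hε, div_mul_eq_mul_div, div_le_iff₀ (by positivity)]
        nlinarith
      -- minimum property for ζ'
      have hmin' : ∀ q ∈ Q, m' ≤ dotp ζ' q := by
        intro q hq
        rw [heval]
        by_cases hqB : q ∈ B
        · have h1 : dotp ζ q = m := hqB.2
          have h2 : β ≤ q i0 := hqβmin q hqB
          rw [h1, hm']
          nlinarith [hε0]
        · by_cases hqR : q ∈ R
          · have h1 := hδgap q hqR hqB
            have h2 : 0 ≤ ε * q i0 := mul_nonneg hε0.le (hnn q hq i0)
            rw [hm']; linarith
          · have h1 : m + β + 1 < dotp ζ q := by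
              by_contra h
              push_neg at h
              exact hqR ⟨hq, h⟩
            have h2 : 0 ≤ ε * q i0 := mul_nonneg hε0.le (hnn q hq i0)
            rw [hm']; linarith
      have hqβval : dotp ζ' qβ = m' := by
        rw [heval, hqβB.2, hm', hβ]
      -- argmin for ζ' is a proper subset of B
      have hsub : {q ∈ Q | dotp ζ' q = m'} ⊆ B := by
        rintro q ⟨hqQ, hqval⟩
        by_contra hqB
        rw [heval] at hqval
        by_cases hqR : q ∈ R
        · have h1 := hδgap q hqR hqB
          have h2 : 0 ≤ ε * q i0 := mul_nonneg hε0.le (hnn q hqQ i0)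
          rw [hm'] at hqval; linarith
        · have h1 : m + β + 1 < dotp ζ q := by
            by_contra h
            push_neg at h
            exact hqR ⟨hqQ, h⟩
          have h2 : 0 ≤ ε * q i0 := mul_nonneg hε0.le (hnn q hqQ i0)
          rw [hm'] at hqval; linarith
      have hfin' : {q ∈ Q | dotp ζ' q = m'}.Finite := hfin.subset hsub
      -- it misses one of q1 q2
      have hmiss : ∃ qq ∈ B, qq ∉ {q ∈ Q | dotp ζ' q = m'} := by
        have hchar : ∀ q ∈ B, dotp ζ' q = m' ↔ q i0 = β := by
          intro q hqB
          rw [heval, hqB.2, hm']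
          constructor
          · intro h
            have : ε * q i0 = ε * β := by linarith
            exact mul_left_cancel₀ hε0.ne' this
          · intro h; rw [h]
        by_cases h1 : q1 i0 = β
        · refine ⟨q2, hq2, ?_⟩
          intro hq2'
          have := (hchar q2 hq2).1 hq2'.2
          exact hi0 (by rw [h1, this])
        · refine ⟨q1, hq1, ?_⟩
          intro hq1'
          exact h1 ((hchar q1 hq1).1 hq1'.2)
      obtain ⟨qs, hqsB, hqsnot⟩ := hmiss
      have hcard' : hfin'.toFinset.card ≤ c := by
        have hss : hfin'.toFinset ⊂ hfin.toFinset := by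
          rw [Finset.ssubset_def]
          constructor
          · intro x hx
            rw [Set.Finite.mem_toFinset] at *
            exact hsub hx
          · intro hcon
            have := hcon (by rw [Set.Finite.mem_toFinset]; exact hqsB)
            rw [Set.Finite.mem_toFinset] at this
            exact hqsnot this
        have := Finset.card_lt_card hss
        omega
      obtain ⟨u, huQ, huval, hfinal⟩ :=
        ih ζ' hζ'pos m' ⟨qβ, hqβB.1, hqβval⟩ hmin' hfin' hcard'
      have huB : u ∈ B := hsub ⟨huQ, huval⟩
      exact ⟨u, huQ, huB.2, hfinal⟩

/-- VERTEXFIND: every strictly positive functional has a vertex among its minimizers. -/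
theorem vertexfind {Q : Set (Fin k → ℝ)} {N : ℕ} (hN : 0 < N)
    (hdisc : ∀ q ∈ Q, ∀ i, ∃ m : ℕ, q i = (m : ℝ) / N)
    (hQne : Q.Nonempty) {ζ : Fin k → ℝ} (hζ : ∀ i, 0 < ζ i) :
    ∃ u ∈ Q, (∀ q ∈ Q, dotp ζ u ≤ dotp ζ q) ∧ ∃ ζ₂ : Fin k → ℝ, (∀ i, 0 < ζ₂ i) ∧
      (∀ q ∈ Q, dotp ζ₂ u ≤ dotp ζ₂ q) ∧ (∀ q ∈ Q, dotp ζ₂ q = dotp ζ₂ u → q = u) := by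
  obtain ⟨m, hex, hmin, hfin⟩ := exists_min_discrete hN hdisc hζ hQne
  obtain ⟨u, huQ, hum, hfinal⟩ :=
    vertexfind_aux hN hdisc hfin.toFinset.card ζ hζ m hex hmin hfin (le_refl _)
  exact ⟨u, huQ, fun q hq => by rw [hum]; exact hmin q hq, hfinal⟩

end Aux4
section Aux4b

variable {k : ℕ}

theorem aff_root_pos {c b : ℝ} (hc : 0 < c) (hb : b < 0) :
    0 < c / (c - b) ∧ c / (c - b) < 1 ∧ (1 - c / (c - b)) * c + (c / (c - b)) * b = 0 := by
  have hd : 0 < c - b := by linarith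
  refine ⟨div_pos hc hd, ?_, ?_⟩
  · rw [div_lt_one hd]; linarith
  · field_simp
    ring

theorem aff_strict {c b : ℝ} (hc : 0 < c) (hb : b < 0) :
    0 < 2*c/(2*c - b) ∧ 2*c/(2*c - b) < 1 ∧
      (1 - 2*c/(2*c - b)) * c + (2*c/(2*c - b)) * b < 0 := by
  have hd : 0 < 2*c - b := by linarith
  refine ⟨div_pos (by linarith) hd, by rw [div_lt_one hd]; linarith, ?_⟩
  have key : (1 - 2*c/(2*c - b)) * c + (2*c/(2*c - b)) * b = c*b/(2*c - b) := by
    field_simp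
    ring
  rw [key]
  exact div_neg_of_neg_of_pos (mul_neg_of_pos_of_neg hc hb) hd

theorem aff_le_of_neg {c b s₁ : ℝ} (hc : 0 < c) (hb : b < 0)
    (hneg : (1 - s₁) * c + s₁ * b < 0) : c / (c - b) ≤ s₁ := by
  have hd : 0 < c - b := by linarith
  rw [div_le_iff₀ hd]
  nlinarith

theorem aff_nonneg_between {c b s σ : ℝ} (h0 : 0 ≤ c) (hσ : 0 ≤ (1 - σ) * c + σ * b)
    (hs0 : 0 ≤ s) (hsσ : s ≤ σ) : 0 ≤ (1 - s) * c + s * b := by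
  rcases le_or_gt 0 (b - c) with h | h
  · nlinarith
  · nlinarith [mul_le_mul_of_nonpos_right hsσ h.le]

/-- PERTURB: if `v` is the unique minimizer of `ξ'` over `Q` but some `q0 ∈ Q` is
below `v` in coordinate `i0`, then some strictly positive functional attains its
minimum over `Q` at `v` and at another point of `Q` as well. -/
theorem perturb {Q : Set (Fin k → ℝ)} {N : ℕ} (hN : 0 < N)
    (hdisc : ∀ q ∈ Q, ∀ i, ∃ m : ℕ, q i = (m : ℝ) / N)
    {ξ' : Fin k → ℝ} (hξ' : ∀ i, 0 < ξ' i) {v : Fin k → ℝ} (hvQ : v ∈ Q)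
    (hmin : ∀ q ∈ Q, dotp ξ' v ≤ dotp ξ' q)
    (huniq : ∀ q ∈ Q, dotp ξ' q = dotp ξ' v → q = v)
    {q0 : Fin k → ℝ} (hq0 : q0 ∈ Q) {i0 : Fin k} (hlt : q0 i0 < v i0) :
    ∃ ζ : Fin k → ℝ, (∀ i, 0 < ζ i) ∧ (∀ q ∈ Q, dotp ζ v ≤ dotp ζ q) ∧
      ∃ u ∈ Q, u ≠ v ∧ dotp ζ u = dotp ζ v := by
  classical
  have hnn : ∀ q ∈ Q, ∀ i, 0 ≤ q i := by
    intro q hq i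
    obtain ⟨m, hm⟩ := hdisc q hq i
    rw [hm]; positivity
  have hc0 : 0 < dotp ξ' q0 - dotp ξ' v := by
    rcases lt_or_eq_of_le (hmin q0 hq0) with h | h
    · linarith
    · exfalso
      have := huniq q0 hq0 h.symm
      rw [this] at hlt
      exact lt_irrefl _ hlt
  have hb0 : q0 i0 - v i0 < 0 := by linarith
  obtain ⟨hs₁0, hs₁1, hs₁neg⟩ := aff_strict hc0 hb0
  set s₁ := 2*(dotp ξ' q0 - dotp ξ' v)/(2*(dotp ξ' q0 - dotp ξ' v) - (q0 i0 - v i0)) with hs₁def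
  -- the perturbed family
  have heval : ∀ (s : ℝ) r, dotp (fun j => (1-s) * ξ' j + s * (if j = i0 then (1:ℝ) else 0)) r
      = (1-s) * dotp ξ' r + s * r i0 := fun s r => dotp_eval_perturb ξ' i0 s r
  have hg : ∀ (s : ℝ) r, dotp (fun j => (1-s) * ξ' j + s * (if j = i0 then (1:ℝ) else 0)) r
        - dotp (fun j => (1-s) * ξ' j + s * (if j = i0 then (1:ℝ) else 0)) v
      = (1-s) * (dotp ξ' r - dotp ξ' v) + s * (r i0 - v i0) := by
    intro s r; rw [heval, heval]; ring
  -- the finite relevant set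
  have hCv : 0 ≤ dotp ξ' v := dotp_nonneg (fun i => (hξ' i).le) (hnn v hvQ)
  set R := {r ∈ Q | dotp ξ' r ≤ (dotp ξ' v + v i0) / (1 - s₁)} with hRdef
  have hRfin : R.Finite := finite_bdd hN hdisc hξ' _
  -- q0 ∈ R
  have hq0R : q0 ∈ R := by
    refine ⟨hq0, ?_⟩
    rw [le_div_iff₀ (by linarith : (0:ℝ) < 1 - s₁)]
    have hq0i : 0 ≤ q0 i0 := hnn q0 hq0 i0
    have hvi : 0 ≤ v i0 := hnn v hvQ i0
    nlinarith
  -- violators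
  set V := {r ∈ R | (1-s₁) * (dotp ξ' r - dotp ξ' v) + s₁ * (r i0 - v i0) < 0} with hVdef
  have hVfin : V.Finite := hRfin.subset fun r hr => hr.1
  have hVne : V.Nonempty := ⟨q0, hq0R, hs₁neg⟩
  -- data for violators
  have hVdata : ∀ r ∈ V, 0 < dotp ξ' r - dotp ξ' v ∧ r i0 - v i0 < 0 := by
    rintro r ⟨hrR, hrneg⟩
    have hcr : 0 ≤ dotp ξ' r - dotp ξ' v := by linarith [hmin r hrR.1]
    have hcr' : 0 < dotp ξ' r - dotp ξ' v := by
      rcases lt_or_eq_of_le hcr with h | h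
      · exact h
      · exfalso
        have hrv : r = v := huniq r hrR.1 (by linarith)
        rw [hrv] at hrneg
        simp at hrneg
    refine ⟨hcr', ?_⟩
    by_contra h
    push_neg at h
    nlinarith
  -- minimize the critical parameter over V
  obtain ⟨u, huV, humin⟩ := Set.exists_min_image V
    (fun r => (dotp ξ' r - dotp ξ' v) / ((dotp ξ' r - dotp ξ' v) - (r i0 - v i0)))
    hVfin hVne
  obtain ⟨hcu, hbu⟩ := hVdata u huV
  obtain ⟨hsu0, hsu1, husero⟩ := aff_root_pos hcu hbu
  set su := (dotp ξ' u - dotp ξ' v) / ((dotp ξ' u - dotp ξ' v) - (u i0 - v i0)) with hsudef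
  have hsus₁ : su ≤ s₁ := aff_le_of_neg hcu hbu huV.2
  refine ⟨fun j => (1-su) * ξ' j + su * (if j = i0 then (1:ℝ) else 0), ?_, ?_, u, huV.1.1, ?_, ?_⟩
  · intro i
    have h1 : 0 < (1 - su) * ξ' i := mul_pos (by linarith) (hξ' i)
    have h2 : (0:ℝ) ≤ su * (if i = i0 then (1:ℝ) else 0) := by
      by_cases h : i = i0 <;> simp [h, hsu0.le]
    show 0 < (1-su) * ξ' i + su * (if i = i0 then (1:ℝ) else 0)
    linarith
  · -- v is a minimizer over Q
    intro q hq
    rw [← sub_nonneg, hg]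
    have hcq : 0 ≤ dotp ξ' q - dotp ξ' v := by linarith [hmin q hq]
    by_cases hqR : q ∈ R
    · by_cases hqV : q ∈ V
      · obtain ⟨hcq', hbq'⟩ := hVdata q hqV
        obtain ⟨hφ0, hφ1, hφzero⟩ := aff_root_pos hcq' hbq'
        exact aff_nonneg_between hcq (le_of_eq hφzero.symm) hsu0.le (humin q hqV)
      · have hq1' : 0 ≤ (1 - s₁) * (dotp ξ' q - dotp ξ' v) + s₁ * (q i0 - v i0) := by
          by_contra h
          push_neg at h
          exact hqV ⟨hqR, h⟩
        exact aff_nonneg_between hcq hq1' hsu0.le hsus₁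
    · -- q outside R
      have h1 : (dotp ξ' v + v i0) / (1 - s₁) < dotp ξ' q := by
        by_contra h
        push_neg at h
        exact hqR ⟨hq, h⟩
      rw [div_lt_iff₀ (by linarith : (0:ℝ) < 1 - s₁)] at h1
      have h4 : (1 - s₁) * dotp ξ' q ≤ (1 - su) * dotp ξ' q := by
        apply mul_le_mul_of_nonneg_right _ (dotp_nonneg (fun i => (hξ' i).le) (hnn q hq))
        linarith
      have hq0i : 0 ≤ q i0 := hnn q hq i0
      have hvi : 0 ≤ v i0 := hnn v hvQ i0
      nlinarith
  · -- u ≠ v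
    intro h
    rw [h] at hcu
    simp at hcu
  · -- equality of values at u and v
    have := hg su u
    linarith [husero, hg su u]

end Aux4b
section Aux5

variable {k : ℕ}

theorem vectorSpan_le_line {s : Set (Fin k → ℝ)} {p u : Fin k → ℝ}
    (h : ∀ x ∈ s, ∃ t : ℝ, x = p + t • u) :
    vectorSpan ℝ s ≤ Submodule.span ℝ {u} := by
  rw [vectorSpan_def, Submodule.span_le]
  intro w hw
  obtain ⟨x, hx, y, hy, hxy⟩ := hw
  obtain ⟨t1, rfl⟩ := h x hx
  obtain ⟨t2, rfl⟩ := h y hy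
  have hw' : w = (t1 - t2) • u := by
    rw [← hxy]
    show (p + t1 • u) -ᵥ (p + t2 • u) = (t1 - t2) • u
    rw [vsub_eq_sub]; module
  rw [hw']
  exact SetLike.mem_coe.2 (Submodule.smul_mem _ _ (Submodule.mem_span_singleton_self u))

theorem npDim_le_one_of_line {s : Set (Fin k → ℝ)} {p u : Fin k → ℝ}
    (h : ∀ x ∈ s, ∃ t : ℝ, x = p + t • u) : npDim s ≤ 1 := by
  have h1 := Submodule.finrank_mono (vectorSpan_le_line h)
  rcases eq_or_ne u 0 with rfl | hu
  · have : Submodule.span ℝ ({0} : Set (Fin k → ℝ)) = ⊥ := by simp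
    rw [this] at h1
    simpa [npDim] using h1.trans (by simp)
  · rw [finrank_span_singleton hu] at h1
    exact h1

theorem npDim_segment {a b : Fin k → ℝ} (hab : a ≠ b) :
    npDim (segment ℝ a b) = 1 := by
  apply le_antisymm
  · apply npDim_le_one_of_line (p := a) (u := b - a)
    rintro x ⟨s, t, hs, ht, hst, rfl⟩
    refine ⟨t, ?_⟩
    have hs1 : s = 1 - t := by linarith
    subst hs1
    module
  · have hmem : b - a ∈ vectorSpan ℝ (segment ℝ a b) := by
      have := vsub_mem_vectorSpan ℝ (right_mem_segment ℝ a b) (left_mem_segment ℝ a b)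
      rwa [vsub_eq_sub] at this
    have hle : Submodule.span ℝ {b - a} ≤ vectorSpan ℝ (segment ℝ a b) := by
      rw [Submodule.span_le, Set.singleton_subset_iff]
      exact hmem
    have := Submodule.finrank_mono hle
    rwa [finrank_span_singleton (sub_ne_zero.2 (Ne.symm hab))] at this

theorem two_le_npDim {s : Set (Fin k → ℝ)} {p1 p2 p3 : Fin k → ℝ}
    (h1 : p1 ∈ s) (h2 : p2 ∈ s) (h3 : p3 ∈ s)
    (hli : LinearIndependent ℝ ![p2 - p1, p3 - p1]) : 2 ≤ npDim s := by
  have hle : Submodule.span ℝ (Set.range ![p2 - p1, p3 - p1]) ≤ vectorSpan ℝ s := by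
    rw [Submodule.span_le]
    rintro w ⟨i, rfl⟩
    fin_cases i
    · simpa [vsub_eq_sub] using vsub_mem_vectorSpan ℝ h2 h1
    · simpa [vsub_eq_sub] using vsub_mem_vectorSpan ℝ h3 h1
  have := Submodule.finrank_mono hle
  rw [finrank_span_eq_card hli] at this
  simpa [npDim] using this

end Aux5

section Aux6

variable {n : ℕ}

/-- The radial projection from `(0,…,0,d)` composed with setting the last coordinate to `0`. -/
noncomputable def prm (d : ℕ) (p : Fin (n+1) → ℝ) : Fin n → ℝ :=
  fun i => ((d : ℝ) / ((d : ℝ) - p (Fin.last n))) * p i.castSucc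

/-- Direction vector of the ray from `(0,…,0,d)` towards `(q,0)`. -/
noncomputable def uvec (d : ℕ) (q : Fin n → ℝ) : Fin (n+1) → ℝ := Fin.snoc q (-(d : ℝ))

theorem embed2_cs (α : Fin n →₀ ℕ) (j : ℕ) (i : Fin n) :
    embed2 α j i.castSucc = α i := by
  have h : ((i.castSucc : Fin (n+1)) : ℕ) < n := by simp
  simp [embed2, h]

theorem embed2_last (α : Fin n →₀ ℕ) (j : ℕ) :
    embed2 α j (Fin.last n) = j := by
  simp [embed2]

theorem vd_cs (d : ℕ) (i : Fin n) : embed2 (0 : Fin n →₀ ℕ) d i.castSucc = 0 := by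
  rw [embed2_cs]; simp

theorem vd_last (d : ℕ) : embed2 (0 : Fin n →₀ ℕ) d (Fin.last n) = d :=
  embed2_last _ _

theorem dotp_split (ξ p : Fin (n+1) → ℝ) :
    dotp ξ p = dotp (fun i => ξ i.castSucc) (fun i => p i.castSucc)
      + ξ (Fin.last n) * p (Fin.last n) := by
  unfold dotp
  rw [Fin.sum_univ_castSucc]

theorem dotp_snoc (ζ : Fin n → ℝ) (c : ℝ) (p : Fin (n+1) → ℝ) :
    dotp (Fin.snoc ζ c) p = dotp ζ (fun i => p i.castSucc) + c * p (Fin.last n) := by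
  rw [dotp_split]
  simp [Fin.snoc_castSucc, Fin.snoc_last]

theorem dotp_vd (d : ℕ) (ξ : Fin (n+1) → ℝ) :
    dotp ξ (embed2 (0 : Fin n →₀ ℕ) d) = ξ (Fin.last n) * d := by
  rw [dotp_split]
  have : (fun i : Fin n => embed2 (0 : Fin n →₀ ℕ) d i.castSucc) = fun _ => (0:ℝ) := by
    funext i; exact vd_cs d i
  rw [this, vd_last]
  simp [dotp]

/-- VAL: value of a lifted functional at a point below level `d`. -/
theorem val_eq {d : ℕ} (hd : (0:ℝ) < d) {p : Fin (n+1) → ℝ}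
    (hk : p (Fin.last n) < d) (ζ : Fin n → ℝ) (c : ℝ) :
    dotp (Fin.snoc ζ c) p
      = ((d - p (Fin.last n)) / d) * dotp ζ (prm d p) + c * p (Fin.last n) := by
  rw [dotp_snoc]
  congr 1
  have hprm : prm d p = ((d : ℝ) / ((d : ℝ) - p (Fin.last n))) • (fun i => p i.castSucc) := by
    funext i; simp [prm]
  rw [hprm, dotp_smul, ← mul_assoc]
  have hne : (d : ℝ) - p (Fin.last n) ≠ 0 := by linarith
  field_simp

/-- RayParam: a point below level `d` lies on the ray from `(0,…,0,d)` through its projection. -/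
theorem ray_param {d : ℕ} (hd : (0:ℝ) < d) {p : Fin (n+1) → ℝ}
    (hk : p (Fin.last n) < d) :
    p = embed2 (0 : Fin n →₀ ℕ) d + ((d - p (Fin.last n)) / d) • uvec d (prm d p) := by
  have hne : (d : ℝ) - p (Fin.last n) ≠ 0 := by linarith
  funext i
  refine Fin.lastCases ?_ ?_ i
  · simp only [Pi.add_apply, Pi.smul_apply, uvec, Fin.snoc_last, vd_last, smul_eq_mul]
    field_simp
    ring
  · intro i
    simp only [Pi.add_apply, Pi.smul_apply, uvec, Fin.snoc_castSucc, vd_cs, smul_eq_mul, prm]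
    field_simp
    ring

theorem uvec_ne_zero {d : ℕ} (hd : (0:ℝ) < d) (q : Fin n → ℝ) : uvec d q ≠ 0 := by
  intro h
  have h2 := congrFun h (Fin.last n)
  simp [uvec] at h2
  have : (d:ℝ) = 0 := by exact_mod_cast h2
  linarith

/-- Linear independence of two distinct rays from the apex. -/
theorem li_rays {d : ℕ} (hd : (0:ℝ) < d) {v w : Fin n → ℝ} (hvw : v ≠ w)
    {t1 t2 : ℝ} (ht1 : 0 < t1) (ht2 : 0 < t2) :
    LinearIndependent ℝ ![t1 • uvec d v, t2 • uvec d w] := by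
  rw [LinearIndependent.pair_iff]
  intro s t hst
  have hlast := congrFun hst (Fin.last n)
  simp only [Pi.add_apply, Pi.smul_apply, uvec, Fin.snoc_last, smul_eq_mul,
    Pi.zero_apply] at hlast
  have hsum : s * t1 + t * t2 = 0 := by
    have heq : (s * t1 + t * t2) * (-(d:ℝ)) = 0 := by
      rw [← hlast]; ring
    rcases mul_eq_zero.1 heq with h | h
    · exact h
    · exfalso; rw [neg_eq_zero] at h; linarith
  have hs0 : s = 0 := by
    by_contra hs
    apply hvw
    funext i
    have hcs := congrFun hst (Fin.castSucc i)
    simp only [Pi.add_apply, Pi.smul_apply, uvec, Fin.snoc_castSucc, smul_eq_mul,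
      Pi.zero_apply] at hcs
    have key : t * t2 * (w i - v i) = 0 := by
      linear_combination hcs - v i * hsum
    have htt2 : t * t2 ≠ 0 := by
      intro h
      rcases mul_eq_zero.1 h with h' | h'
      · rw [h'] at hsum
        simp at hsum
        rcases hsum with h'' | h''
        · exact hs h''
        · linarith
      · linarith
    rcases mul_eq_zero.1 key with h | h
    · exact absurd h htt2
    · linarith
  refine ⟨hs0, ?_⟩
  rw [hs0] at hsum
  simp at hsum
  rcases hsum with h | h
  · exact h
  · linarith

end Aux6
section Aux7

variable {k : ℕ}

theorem dotp_coord_eps (i : Fin k) (ε : ℝ) (x : Fin k → ℝ) :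
    dotp (fun j => (if j = i then (1:ℝ) else 0) + ε) x = x i + ε * ∑ j, x j := by
  unfold dotp
  simp only [add_mul]
  rw [Finset.sum_add_distrib]
  congr 1
  · rw [Finset.sum_eq_single i]
    · simp
    · intro b _ hb; simp [hb]
    · simp
  · rw [Finset.mul_sum]

theorem dotp_ones (x : Fin k → ℝ) : dotp (fun _ => (1:ℝ)) x = ∑ j, x j := by
  unfold dotp; simp

/-- (C) implies a unique vertex. -/
theorem vertex_of_C {Q : Set (Fin k → ℝ)} {v : Fin k → ℝ} (hvQ : v ∈ Q)
    (hdom : ∀ q ∈ Q, ∀ i, v i ≤ q i) : ∃! w, IsVertexOf (hullP Q) w := by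
  have hsub : ∀ x ∈ hullP Q, ∀ i, v i ≤ x i := fun x hx => hullP_subset_upperset hdom hx
  have hface : NPface (hullP Q) (fun _ => 1) = {v} := by
    ext x
    constructor
    · rintro ⟨hxΔ, hxmin⟩
      have h1 : dotp (fun _ => (1:ℝ)) x ≤ dotp (fun _ => 1) v :=
        hxmin v (mem_hullP_of_mem hvQ)
      rw [dotp_ones, dotp_ones] at h1
      have h2 := hsub x hxΔ
      have hzero : ∀ i ∈ Finset.univ, x i - v i = 0 := by
        rw [← Finset.sum_eq_zero_iff_of_nonneg (fun i _ => by linarith [h2 i])]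
        rw [Finset.sum_sub_distrib]
        have h3 : ∑ j, v j ≤ ∑ j, x j := Finset.sum_le_sum (fun j _ => h2 j)
        linarith
      have : x = v := by
        funext i
        have := hzero i (Finset.mem_univ i)
        linarith
      exact this
    · rintro rfl
      refine ⟨mem_hullP_of_mem hvQ, fun b hb => ?_⟩
      exact dotp_mono (fun _ => zero_le_one) (hsub b hb)
  refine ⟨v, ⟨fun _ => 1, fun _ => zero_le_one, hface⟩, ?_⟩
  rintro w ⟨η, hη, hwface⟩
  have hw : w ∈ NPface (hullP Q) η := by rw [hwface]; exact rfl
  obtain ⟨hwΔ, hwmin⟩ := hw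
  have h1 : dotp η w ≤ dotp η v := hwmin v (mem_hullP_of_mem hvQ)
  have h2 : dotp η v ≤ dotp η w := dotp_mono hη (hsub w hwΔ)
  have hv : v ∈ NPface (hullP Q) η :=
    ⟨mem_hullP_of_mem hvQ, fun b hb => le_trans (by linarith) (hwmin b hb)⟩
  rw [hwface] at hv
  exact (Set.mem_singleton_iff.1 hv).symm

/-- A unique vertex implies (C). -/
theorem C_of_vertex {Q : Set (Fin k → ℝ)} {N : ℕ} (hN : 0 < N)
    (hdisc : ∀ q ∈ Q, ∀ i, ∃ m : ℕ, q i = (m : ℝ) / N)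
    (h : ∃! w, IsVertexOf (hullP Q) w) :
    ∃ v ∈ Q, ∀ q ∈ Q, ∀ i, v i ≤ q i := by
  obtain ⟨v, hvvert, hvuniq⟩ := h
  obtain ⟨η, hη, hface⟩ := hvvert
  have hvmem : v ∈ NPface (hullP Q) η := by rw [hface]; exact rfl
  have hQne : Q.Nonempty := by
    obtain ⟨⟨y, hy, -⟩, -⟩ := hvmem
    exact convexHull_nonempty_iff.1 ⟨y, hy⟩
  have hηpos : ∀ i, 0 < η i := by
    intro i
    rcases lt_or_eq_of_le (hη i) with h | h
    · exact h
    · exfalso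
      refine NPface_not_compact hη h.symm hvmem ?_
      rw [hface]
      exact isCompact_singleton
  obtain ⟨m, hmex, hmmin, -⟩ := exists_min_discrete hN hdisc hηpos hQne
  have hfeq := NPface_hullP_eq hηpos hmmin hmex
  rw [hface] at hfeq
  have hvQ : v ∈ Q := by
    obtain ⟨q0, hq0Q, hq0m⟩ := hmex
    have : q0 ∈ convexHull ℝ {q ∈ Q | dotp η q = m} :=
      subset_convexHull ℝ _ ⟨hq0Q, hq0m⟩
    rw [← hfeq] at this
    exact (Set.mem_singleton_iff.1 this) ▸ hq0Q
  -- every strictly positive functional is minimized at v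
  have hminall : ∀ ζ : Fin k → ℝ, (∀ i, 0 < ζ i) → ∀ q ∈ Q, dotp ζ v ≤ dotp ζ q := by
    intro ζ hζ
    obtain ⟨u, huQ, humin, ζ₂, hζ₂pos, hζ₂min, hζ₂uniq⟩ := vertexfind hN hdisc hQne hζ
    have huvert : IsVertexOf (hullP Q) u := by
      refine ⟨ζ₂, fun i => (hζ₂pos i).le, ?_⟩
      have heq : {q ∈ Q | dotp ζ₂ q = dotp ζ₂ u} = {u} := by
        ext q
        constructor
        · rintro ⟨hqQ, hqe⟩; exact hζ₂uniq q hqQ hqe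
        · rintro rfl; exact ⟨huQ, rfl⟩
      rw [NPface_hullP_eq hζ₂pos hζ₂min ⟨u, huQ, rfl⟩, heq, convexHull_singleton]
    have huv : u = v := hvuniq u huvert
    rw [← huv]
    exact humin
  refine ⟨v, hvQ, fun q hq i => ?_⟩
  by_contra hcon
  push_neg at hcon
  have key : ∀ ε : ℝ, 0 < ε → v i + ε * (∑ j, v j) ≤ q i + ε * (∑ j, q j) := by
    intro ε hε
    have hpos : ∀ j, 0 < (if j = i then (1:ℝ) else 0) + ε := by
      intro j
      by_cases hj : j = i <;> simp [hj] <;> linarith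
    have := hminall (fun j => (if j = i then (1:ℝ) else 0) + ε) hpos q hq
    rwa [dotp_coord_eps, dotp_coord_eps] at this
  set c := v i - q i with hc
  have hc0 : 0 < c := by simp [hc]; linarith
  set K := (∑ j, q j) - (∑ j, v j) with hK
  have hkey : ∀ ε : ℝ, 0 < ε → c ≤ ε * K := by
    intro ε hε
    have := key ε hε
    simp only [hc, hK]
    nlinarith
  rcases le_or_gt K 0 with h | h
  · have := hkey 1 one_pos
    nlinarith
  · have := hkey (c / (2 * K)) (by positivity)
    rw [div_mul_eq_mul_div, mul_comm] at this
    have h2 : K * c / (2 * K) = c / 2 := by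
      field_simp
    rw [h2] at this
    linarith

end Aux7
section Aux8

variable {n : ℕ}

theorem lift_diff {d : ℕ} (hd : (0:ℝ) < d) {p : Fin (n+1) → ℝ}
    (hk : p (Fin.last n) < d) (ζ : Fin n → ℝ) (μ : ℝ) :
    dotp (Fin.snoc ζ (μ/d)) p - μ
      = ((d - p (Fin.last n))/d) * (dotp ζ (prm d p) - μ) := by
  rw [val_eq hd hk]
  field_simp
  ring

theorem dotp_snoc_vtx {d : ℕ} (hd : (0:ℝ) < d) (ζ : Fin n → ℝ) (μ : ℝ) :
    dotp (Fin.snoc ζ (μ/d)) (embed2 (0 : Fin n →₀ ℕ) d) = μ := by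
  rw [dotp_vd, Fin.snoc_last]
  field_simp

theorem snoc_pos {ζ : Fin n → ℝ} {c : ℝ} (hζ : ∀ i, 0 < ζ i) (hc : 0 < c) :
    ∀ i, 0 < (Fin.snoc ζ c : Fin (n+1) → ℝ) i := by
  intro i
  induction i using Fin.lastCases with
  | last => rw [Fin.snoc_last]; exact hc
  | cast j => rw [Fin.snoc_castSucc]; exact hζ j

theorem snoc_init_eq {ξ : Fin (n+1) → ℝ} {c : ℝ} (h : ξ (Fin.last n) = c) :
    ξ = Fin.snoc (fun i => ξ i.castSucc) c := by
  funext i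
  refine Fin.lastCases ?_ ?_ i
  · rw [Fin.snoc_last, h]
  · intro j; rw [Fin.snoc_castSucc]

theorem dotp_uvec {d : ℕ} (ζ : Fin n → ℝ) (c : ℝ) (v : Fin n → ℝ) :
    dotp (Fin.snoc ζ c) (uvec d v) = dotp ζ v + c * (-(d:ℝ)) := by
  rw [dotp_snoc]
  congr 1
  · congr 1
    funext i
    simp [uvec, Fin.snoc_castSucc]
  · simp [uvec, Fin.snoc_last]

theorem dom_eq {ζ : Fin n → ℝ} (hζ : ∀ i, 0 < ζ i) {v q : Fin n → ℝ}
    (hdom : ∀ i, v i ≤ q i) (heq : dotp ζ q = dotp ζ v) : q = v := by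
  have h1 : dotp ζ (q - v) = 0 := by rw [dotp_sub]; linarith
  have h2 := eq_zero_of_dotp_eq_zero hζ
    (fun i => by simp only [Pi.sub_apply]; linarith [hdom i]) h1
  funext i
  have := congrFun h2 i
  simp only [Pi.sub_apply, Pi.zero_apply] at this
  linarith

theorem mem_segment_ray {vtx a p u : Fin (n+1) → ℝ} {tp ta : ℝ}
    (hp : p = vtx + tp • u) (ha : a = vtx + ta • u) (h0 : 0 ≤ tp)
    (hpa : tp ≤ ta) (hta : 0 < ta) : p ∈ segment ℝ vtx a := by
  refine ⟨1 - tp/ta, tp/ta, ?_, by positivity, by ring, ?_⟩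
  · have h1 : tp/ta ≤ 1 := by
      rw [div_le_one hta]; exact hpa
    linarith
  · have hmul : (tp/ta) * ta = tp := div_mul_cancel₀ _ hta.ne'
    rw [hp, ha, smul_add, smul_smul, hmul]
    module

theorem convex_line (p u : Fin (n+1) → ℝ) : Convex ℝ {x | ∃ t : ℝ, x = p + t • u} := by
  rintro x ⟨t1, rfl⟩ y ⟨t2, rfl⟩ s t hs ht hst
  refine ⟨s * t1 + t * t2, ?_⟩
  have h1 : s = 1 - t := by linarith
  subst h1
  module

end Aux8
section Aux9

theorem min_lift {n d : ℕ} {P : Set (Fin (n+1) → ℝ)}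
    (hPoth : ∀ p ∈ P, p ≠ embed2 (0 : Fin n →₀ ℕ) d →
      p (Fin.last n) < (d:ℝ) ∧ ∃ i : Fin n, p i.castSucc ≠ 0)
    (hd : (0:ℝ) < d) {ζ : Fin n → ℝ} {μ : ℝ}
    (hminQ : ∀ q ∈ prm d '' (P \ {embed2 (0 : Fin n →₀ ℕ) d}), μ ≤ dotp ζ q) :
    (∀ p ∈ P, μ ≤ dotp (Fin.snoc ζ (μ/d)) p) ∧
    (∀ p ∈ P, p ≠ embed2 (0 : Fin n →₀ ℕ) d →
      (dotp (Fin.snoc ζ (μ/d)) p = μ ↔ dotp ζ (prm d p) = μ)) := by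
  have key : ∀ p ∈ P, p ≠ embed2 (0 : Fin n →₀ ℕ) d →
      dotp (Fin.snoc ζ (μ/d)) p - μ
        = ((d - p (Fin.last n))/d) * (dotp ζ (prm d p) - μ)
      ∧ 0 < (d - p (Fin.last n))/d := by
    intro p hp hne
    have hk := (hPoth p hp hne).1
    exact ⟨lift_diff hd hk ζ μ, div_pos (by linarith) hd⟩
  constructor
  · intro p hp
    by_cases hne : p = embed2 (0 : Fin n →₀ ℕ) d
    · rw [hne, dotp_snoc_vtx hd]
    · obtain ⟨hdiff, ht⟩ := key p hp hne
      have hX : μ ≤ dotp ζ (prm d p) := hminQ _ ⟨p, ⟨hp, fun h => hne h⟩, rfl⟩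
      nlinarith
  · intro p hp hne
    obtain ⟨hdiff, ht⟩ := key p hp hne
    have hX : μ ≤ dotp ζ (prm d p) := hminQ _ ⟨p, ⟨hp, fun h => hne h⟩, rfl⟩
    constructor
    · intro h
      rw [h, sub_self] at hdiff
      nlinarith
    · intro h
      rw [h, sub_self, mul_zero] at hdiff
      linarith

/-- (C) gives a loose edge. -/
theorem loose_of_C {n d : ℕ} {P : Set (Fin (n+1) → ℝ)}
    (hPnat : ∀ p ∈ P, ∀ i, ∃ m : ℕ, p i = (m : ℝ))
    (hv0 : embed2 (0 : Fin n →₀ ℕ) d ∈ P)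
    (hPoth : ∀ p ∈ P, p ≠ embed2 (0 : Fin n →₀ ℕ) d →
      p (Fin.last n) < (d:ℝ) ∧ ∃ i : Fin n, p i.castSucc ≠ 0)
    {v : Fin n → ℝ} (hvQ : v ∈ prm d '' (P \ {embed2 (0 : Fin n →₀ ℕ) d}))
    (hdom : ∀ q ∈ prm d '' (P \ {embed2 (0 : Fin n →₀ ℕ) d}), ∀ i, v i ≤ q i) :
    ∃ E a, IsLooseEdge (hullP P) E ∧ a ≠ embed2 (0 : Fin n →₀ ℕ) d ∧
      E = segment ℝ a (embed2 (0 : Fin n →₀ ℕ) d) := by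
  classical
  have hPdisc : ∀ p ∈ P, ∀ i, ∃ m : ℕ, p i = (m : ℝ)/(1:ℕ) := by
    intro p hp i
    obtain ⟨m, hm⟩ := hPnat p hp i
    exact ⟨m, by rw [hm]; norm_num⟩
  obtain ⟨p1, hp1mem, hp1v⟩ := hvQ
  obtain ⟨hp1P, hp1ne⟩ := hp1mem
  obtain ⟨hp1k, i1, hi1⟩ := hPoth p1 hp1P (fun h => hp1ne h)
  obtain ⟨kk, hkk⟩ := hPnat p1 hp1P (Fin.last n)
  have hd : (0:ℝ) < d := lt_of_le_of_lt (by rw [hkk]; positivity) hp1k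
  -- coordinates of projected points are nonnegative
  have hQnn : ∀ q ∈ prm d '' (P \ {embed2 (0 : Fin n →₀ ℕ) d}), ∀ i, 0 ≤ q i := by
    rintro q ⟨p, ⟨hpP, hpne⟩, rfl⟩ i
    obtain ⟨mm, hmm⟩ := hPnat p hpP i.castSucc
    have hkp := (hPoth p hpP (fun h => hpne h)).1
    show 0 ≤ ((d:ℝ) / ((d:ℝ) - p (Fin.last n))) * p i.castSucc
    have h1 : 0 < (d:ℝ) - p (Fin.last n) := by linarith
    rw [hmm]
    positivity
  have hvQ' : v ∈ prm d '' (P \ {embed2 (0 : Fin n →₀ ℕ) d}) :=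
    ⟨p1, ⟨hp1P, hp1ne⟩, hp1v⟩
  have hvnn : ∀ i, 0 ≤ v i := hQnn v hvQ'
  set ζ1 : Fin n → ℝ := fun _ => 1 with hζ1def
  set μ := dotp ζ1 v with hμdef
  have hminQ : ∀ q ∈ prm d '' (P \ {embed2 (0 : Fin n →₀ ℕ) d}), μ ≤ dotp ζ1 q :=
    fun q hq => dotp_mono (fun _ => zero_le_one) (hdom q hq)
  have huniqQ : ∀ q ∈ prm d '' (P \ {embed2 (0 : Fin n →₀ ℕ) d}),
      dotp ζ1 q = μ → q = v :=
    fun q hq h => dom_eq (fun _ => one_pos) (hdom q hq) h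
  -- μ > 0
  have hμpos : 0 < μ := by
    have hv1 : 0 < v i1 := by
      rw [← hp1v]
      show 0 < ((d:ℝ) / ((d:ℝ) - p1 (Fin.last n))) * p1 i1.castSucc
      obtain ⟨mm, hmm⟩ := hPnat p1 hp1P i1.castSucc
      have hmm0 : mm ≠ 0 := by
        intro h
        apply hi1
        rw [hmm, h]; norm_num
      have h1 : 0 < (d:ℝ) - p1 (Fin.last n) := by linarith
      have h2 : 0 < p1 i1.castSucc := by
        rw [hmm]
        exact_mod_cast Nat.pos_of_ne_zero hmm0
      positivity
    have hsum : v i1 ≤ ∑ j, v j :=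
      Finset.single_le_sum (fun j _ => hvnn j) (Finset.mem_univ i1)
    rw [hμdef, dotp_ones]
    linarith
  set ξ : Fin (n+1) → ℝ := Fin.snoc ζ1 (μ/d) with hξdef
  have hξpos : ∀ i, 0 < ξ i := snoc_pos (fun _ => one_pos) (by positivity)
  obtain ⟨hminP, hiffP⟩ := min_lift hPoth hd hminQ
  set A := {p ∈ P | dotp ξ p = μ} with hAdef
  have hAfin : A.Finite := by
    refine Set.Finite.subset (finite_bdd Nat.one_pos hPdisc hξpos μ) ?_
    rintro p ⟨hpP, hpval⟩
    exact ⟨hpP, le_of_eq hpval⟩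
  have hvtA : embed2 (0 : Fin n →₀ ℕ) d ∈ A := ⟨hv0, dotp_snoc_vtx hd ζ1 μ⟩
  have hp1A : p1 ∈ A := by
    refine ⟨hp1P, (hiffP p1 hp1P (fun h => hp1ne h)).2 ?_⟩
    rw [hp1v]
  -- all non-apex elements of A lie on the ray towards v
  have hrayA : ∀ p ∈ A, p ≠ embed2 (0 : Fin n →₀ ℕ) d →
      prm d p = v ∧ p = embed2 (0 : Fin n →₀ ℕ) d
        + ((d - p (Fin.last n))/d) • uvec d v
      ∧ 0 < ((d:ℝ) - p (Fin.last n))/d ∧ ((d:ℝ) - p (Fin.last n))/d ≤ 1 := by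
    intro p hpA hpne
    have hk := (hPoth p hpA.1 hpne).1
    have hX : dotp ζ1 (prm d p) = μ := (hiffP p hpA.1 hpne).1 hpA.2
    have hprm : prm d p = v := huniqQ _ ⟨p, ⟨hpA.1, fun h => hpne h⟩, rfl⟩ hX
    have hray := ray_param hd hk
    rw [hprm] at hray
    obtain ⟨mm, hmm⟩ := hPnat p hpA.1 (Fin.last n)
    refine ⟨hprm, hray, div_pos (by linarith) hd, ?_⟩
    rw [div_le_one hd, hmm]
    have : (0:ℝ) ≤ mm := by positivity
    linarith
  -- pick the endpoint a
  have hA'ne : (A \ {embed2 (0 : Fin n →₀ ℕ) d}).Nonempty :=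
    ⟨p1, hp1A, fun h => hp1ne h⟩
  obtain ⟨a, haA', hamin⟩ := Set.exists_min_image _ (fun p => p (Fin.last n))
    hAfin.diff hA'ne
  have haA : a ∈ A := haA'.1
  have hane : a ≠ embed2 (0 : Fin n →₀ ℕ) d := fun h => haA'.2 h
  obtain ⟨haprm, haray, hta0, hta1⟩ := hrayA a haA hane
  -- A is inside the segment
  have hAseg : A ⊆ segment ℝ (embed2 (0 : Fin n →₀ ℕ) d) a := by
    intro p hpA
    by_cases hpne : p = embed2 (0 : Fin n →₀ ℕ) d
    · rw [hpne]; exact left_mem_segment ℝ _ a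
    · obtain ⟨hpprm, hpray, htp0, htp1⟩ := hrayA p hpA hpne
      refine mem_segment_ray hpray haray htp0.le ?_ hta0
      have hle := hamin p ⟨hpA, fun h => hpne h⟩
      have h2 : (d:ℝ) - p (Fin.last n) ≤ (d:ℝ) - a (Fin.last n) := by
        have hle : a (Fin.last n) ≤ p (Fin.last n) := hle
        linarith
      gcongr
  have hsegA : convexHull ℝ A = segment ℝ (embed2 (0 : Fin n →₀ ℕ) d) a := by
    apply Set.Subset.antisymm
    · exact convexHull_min hAseg (convex_segment _ a)
    · rw [← convexHull_pair]
      exact convexHull_mono (Set.pair_subset_iff.2 ⟨hvtA, haA⟩)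
  have hface : NPface (hullP P) ξ = convexHull ℝ A :=
    NPface_hullP_eq hξpos hminP ⟨_, hv0, dotp_snoc_vtx hd ζ1 μ⟩
  refine ⟨segment ℝ a (embed2 (0 : Fin n →₀ ℕ) d), a,
    ⟨⟨ξ, fun i => (hξpos i).le, ?_⟩, ?_, ?_, ?_⟩, hane, rfl⟩
  · rw [hface, hsegA, segment_symm]
  · rw [segment_symm, ← hsegA]
    exact hAfin.isCompact_convexHull (𝕜 := ℝ)
  · exact npDim_segment hane
  · -- looseness
    intro F hFface hFcomp hFdim hEF
    obtain ⟨ζF, hζF0, hFeq⟩ := hFface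
    have hvtF : embed2 (0 : Fin n →₀ ℕ) d ∈ F := hEF (right_mem_segment ℝ a _)
    have haF : a ∈ F := hEF (left_mem_segment ℝ a _)
    have hvtNP : embed2 (0 : Fin n →₀ ℕ) d ∈ NPface (hullP P) ζF := by
      rw [← hFeq]; exact hvtF
    have haNP : a ∈ NPface (hullP P) ζF := by rw [← hFeq]; exact haF
    have hζFpos : ∀ i, 0 < ζF i := by
      intro i
      rcases lt_or_eq_of_le (hζF0 i) with h | h
      · exact h
      · exact absurd (hFeq ▸ hFcomp) (NPface_not_compact hζF0 h.symm hvtNP)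
    obtain ⟨mF, hmFex, hmFmin, -⟩ :=
      exists_min_discrete Nat.one_pos hPdisc hζFpos ⟨_, hv0⟩
    have hvtval : dotp ζF (embed2 (0 : Fin n →₀ ℕ) d) = mF := by
      obtain ⟨q', hq'P, hq'val⟩ := hmFex
      have h1 : dotp ζF (embed2 (0 : Fin n →₀ ℕ) d) ≤ mF := by
        rw [← hq'val]; exact hvtNP.2 q' (mem_hullP_of_mem hq'P)
      have h2 : mF ≤ dotp ζF (embed2 (0 : Fin n →₀ ℕ) d) := hmFmin _ hv0
      linarith
    have hζFL : ζF (Fin.last n) = mF / d := by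
      have hvd := dotp_vd d ζF
      rw [hvtval] at hvd
      field_simp
      linarith
    have hsnocF : ζF = Fin.snoc (fun i => ζF i.castSucc) (mF/d) := snoc_init_eq hζFL
    have haval : dotp ζF a = mF := by
      obtain ⟨q', hq'P, hq'val⟩ := hmFex
      have h1 : dotp ζF a ≤ mF := by
        rw [← hq'val]; exact haNP.2 q' (mem_hullP_of_mem hq'P)
      have h2 : mF ≤ dotp ζF a :=
        le_dotp_of_mem_hullP (fun i => (hζFpos i).le) hmFmin haNP.1
      linarith
    -- the head of ζF has value mF at v
    have huvval : dotp ζF (uvec d v) = dotp (fun i => ζF i.castSucc) v - mF := by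
      have h1 : dotp (Fin.snoc (fun i => ζF i.castSucc) (mF/d)) (uvec d v)
          = dotp (fun i => ζF i.castSucc) v + (mF/d) * (-(d:ℝ)) := dotp_uvec _ _ _
      rw [← hsnocF] at h1
      rw [h1]
      field_simp
      ring
    have hinitv : dotp (fun i => ζF i.castSucc) v = mF := by
      have hexp : dotp ζF a = dotp ζF (embed2 (0 : Fin n →₀ ℕ) d)
          + ((d - a (Fin.last n))/d) * dotp ζF (uvec d v) := by
        conv_lhs => rw [haray]
        rw [dotp_add, dotp_smul]
      rw [haval, hvtval, huvval] at hexp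
      have : ((d:ℝ) - a (Fin.last n))/d * (dotp (fun i => ζF i.castSucc) v - mF) = 0 := by
        linarith
      rcases mul_eq_zero.1 this with h | h
      · exact absurd h hta0.ne'
      · linarith
    -- every minimizer lies on the ray
    have hAFray : ∀ p ∈ P, dotp ζF p = mF → ∃ t : ℝ, p = embed2 (0 : Fin n →₀ ℕ) d + t • uvec d v := by
      intro p hpP hpval
      by_cases hpne : p = embed2 (0 : Fin n →₀ ℕ) d
      · exact ⟨0, by rw [hpne]; simp⟩
      · have hk := (hPoth p hpP hpne).1
        have hdiff : dotp ζF p - mF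
            = ((d - p (Fin.last n))/d) * (dotp (fun i => ζF i.castSucc) (prm d p) - mF) := by
          have := lift_diff hd hk (fun i => ζF i.castSucc) mF
          rw [← hsnocF] at this
          exact this
        have ht : 0 < ((d:ℝ) - p (Fin.last n))/d := div_pos (by linarith) hd
        have hXp : dotp (fun i => ζF i.castSucc) (prm d p) = mF := by
          rw [hpval, sub_self] at hdiff
          rcases mul_eq_zero.1 hdiff.symm with h | h
          · exact absurd h ht.ne'
          · linarith
        have hprm : prm d p = v := by
          refine dom_eq (ζ := fun i => ζF i.castSucc) (fun i => hζFpos i.castSucc) (hdom _ ⟨p, ⟨hpP, fun h => hpne h⟩, rfl⟩) ?_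
          rw [hXp, hinitv]
        refine ⟨((d:ℝ) - p (Fin.last n))/d, ?_⟩
        rw [← hprm]
        exact ray_param hd hk
    have hFline : ∀ x ∈ F, ∃ t : ℝ, x = embed2 (0 : Fin n →₀ ℕ) d + t • uvec d v := by
      have hFargmin := NPface_hullP_eq hζFpos hmFmin hmFex
      intro x hx
      rw [hFeq, hFargmin] at hx
      exact convexHull_min (fun p hp => hAFray p hp.1 hp.2)
        (convex_line _ (uvec d v)) hx
    have := npDim_le_one_of_line hFline
    omega

end Aux9
section Aux10

theorem Qdisc {n d : ℕ} {P : Set (Fin (n+1) → ℝ)}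
    (hPnat : ∀ p ∈ P, ∀ i, ∃ m : ℕ, p i = (m : ℝ))
    (hPoth : ∀ p ∈ P, p ≠ embed2 (0 : Fin n →₀ ℕ) d →
      p (Fin.last n) < (d:ℝ) ∧ ∃ i : Fin n, p i.castSucc ≠ 0) :
    ∀ q ∈ prm d '' (P \ {embed2 (0 : Fin n →₀ ℕ) d}), ∀ i,
      ∃ m : ℕ, q i = (m : ℝ)/(d.factorial : ℕ) := by
  rintro q ⟨p, ⟨hpP, hpne⟩, rfl⟩ i
  obtain ⟨hkR, -⟩ := hPoth p hpP (fun h => hpne h)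
  obtain ⟨kk, hkk⟩ := hPnat p hpP (Fin.last n)
  obtain ⟨aa, haa⟩ := hPnat p hpP i.castSucc
  have hkd : kk < d := by rw [hkk] at hkR; exact_mod_cast hkR
  refine ⟨d * aa * (d.factorial / (d - kk)), ?_⟩
  have hdvd : (d - kk) ∣ d.factorial := Nat.dvd_factorial (by omega) (by omega)
  have hnat : (d.factorial / (d - kk)) * (d - kk) = d.factorial := Nat.div_mul_cancel hdvd
  show ((d:ℝ) / ((d:ℝ) - p (Fin.last n))) * p i.castSucc = _
  rw [hkk, haa]
  have hc1 : (d:ℝ) - (kk:ℝ) = ((d - kk : ℕ) : ℝ) := by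
    rw [Nat.cast_sub hkd.le]
  rw [hc1, div_mul_eq_mul_div]
  have h1 : ((d - kk : ℕ) : ℝ) ≠ 0 := by
    have : 0 < d - kk := by omega
    exact_mod_cast this.ne'
  have h2 : ((d.factorial : ℕ) : ℝ) ≠ 0 := by
    exact_mod_cast (Nat.factorial_pos d).ne'
  rw [div_eq_div_iff h1 h2]
  have hnat2 : d * aa * d.factorial = d * aa * (d.factorial/(d - kk)) * (d - kk) := by
    rw [mul_assoc (d * aa), hnat]
  exact_mod_cast hnat2

/-- a loose edge gives (C). -/
theorem C_of_loose {n d : ℕ} {P : Set (Fin (n+1) → ℝ)}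
    (hPnat : ∀ p ∈ P, ∀ i, ∃ m : ℕ, p i = (m : ℝ))
    (hv0 : embed2 (0 : Fin n →₀ ℕ) d ∈ P)
    (hPoth : ∀ p ∈ P, p ≠ embed2 (0 : Fin n →₀ ℕ) d →
      p (Fin.last n) < (d:ℝ) ∧ ∃ i : Fin n, p i.castSucc ≠ 0)
    (h : ∃ E a, IsLooseEdge (hullP P) E ∧ a ≠ embed2 (0 : Fin n →₀ ℕ) d ∧
      E = segment ℝ a (embed2 (0 : Fin n →₀ ℕ) d)) :
    ∃ v ∈ prm d '' (P \ {embed2 (0 : Fin n →₀ ℕ) d}),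
      ∀ q ∈ prm d '' (P \ {embed2 (0 : Fin n →₀ ℕ) d}), ∀ i, v i ≤ q i := by
  classical
  obtain ⟨E, a, ⟨⟨ξ, hξ0, hEeq⟩, hEcomp, hEdim, hloose⟩, hane, hEseg⟩ := h
  have hPdisc : ∀ p ∈ P, ∀ i, ∃ m : ℕ, p i = (m : ℝ)/(1:ℕ) := by
    intro p hp i
    obtain ⟨m, hm⟩ := hPnat p hp i
    exact ⟨m, by rw [hm]; norm_num⟩
  have hvtE : embed2 (0 : Fin n →₀ ℕ) d ∈ E := by
    rw [hEseg]; exact right_mem_segment ℝ a _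
  have haE : a ∈ E := by rw [hEseg]; exact left_mem_segment ℝ a _
  have hvtNP : embed2 (0 : Fin n →₀ ℕ) d ∈ NPface (hullP P) ξ := by
    rw [← hEeq]; exact hvtE
  have hξpos : ∀ i, 0 < ξ i := by
    intro i
    rcases lt_or_eq_of_le (hξ0 i) with h | h
    · exact h
    · exact absurd (hEeq ▸ hEcomp) (NPface_not_compact hξ0 h.symm hvtNP)
  obtain ⟨m, hmex, hmmin, -⟩ := exists_min_discrete Nat.one_pos hPdisc hξpos ⟨_, hv0⟩
  have hvtval : dotp ξ (embed2 (0 : Fin n →₀ ℕ) d) = m := by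
    obtain ⟨q', hq'P, hq'val⟩ := hmex
    have h1 : dotp ξ (embed2 (0 : Fin n →₀ ℕ) d) ≤ m := by
      rw [← hq'val]; exact hvtNP.2 q' (mem_hullP_of_mem hq'P)
    linarith [hmmin _ hv0]
  set A := {p ∈ P | dotp ξ p = m} with hAdef
  have hEconv : E = convexHull ℝ A := by
    rw [hEeq]
    exact NPface_hullP_eq hξpos hmmin hmex
  have hvtA : embed2 (0 : Fin n →₀ ℕ) d ∈ A := ⟨hv0, hvtval⟩
  -- a point of A different from the apex
  have hp1 : ∃ p1 ∈ A, p1 ≠ embed2 (0 : Fin n →₀ ℕ) d := by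
    by_contra hno
    push_neg at hno
    have hsub : A ⊆ {embed2 (0 : Fin n →₀ ℕ) d} := fun p hp => hno p hp
    have : E ⊆ {embed2 (0 : Fin n →₀ ℕ) d} := by
      rw [hEconv]
      refine convexHull_min hsub (convex_singleton _)
    exact hane (this haE)
  obtain ⟨p1, hp1A, hp1ne⟩ := hp1
  obtain ⟨hp1k, i1, hi1⟩ := hPoth p1 hp1A.1 hp1ne
  obtain ⟨kk1, hkk1⟩ := hPnat p1 hp1A.1 (Fin.last n)
  have hd : (0:ℝ) < d := lt_of_le_of_lt (by rw [hkk1]; positivity) hp1k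
  have hξL : ξ (Fin.last n) = m / d := by
    have hvd := dotp_vd d ξ
    rw [hvtval] at hvd
    field_simp
    linarith
  have hsnoc : ξ = Fin.snoc (fun i => ξ i.castSucc) (m/d) := snoc_init_eq hξL
  -- a has last coordinate < d and every element of A away from the apex projects like a
  have hAseg : A ⊆ segment ℝ a (embed2 (0 : Fin n →₀ ℕ) d) := by
    rw [← hEseg, hEconv]
    exact subset_convexHull ℝ A
  -- decomposition of points of the segment
  have hsegdata : ∀ p ∈ A, p ≠ embed2 (0 : Fin n →₀ ℕ) d →
      ∃ σ : ℝ, 0 < σ ∧ σ ≤ 1 ∧ (∀ i : Fin n, p i.castSucc = σ * a i.castSucc) ∧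
        p (Fin.last n) = σ * a (Fin.last n) + (1 - σ) * d := by
    intro p hpA hpne
    obtain ⟨σ, τ, hσ, hτ, hστ, hcomb⟩ := hAseg hpA
    refine ⟨σ, ?_, by linarith, ?_, ?_⟩
    · rcases lt_or_eq_of_le hσ with h | h
      · exact h
      · exfalso
        apply hpne
        rw [← hcomb, ← h]
        have hτ1 : τ = 1 := by linarith
        rw [hτ1]
        simp
    · intro i
      have := congrFun hcomb i.castSucc
      simp only [Pi.add_apply, Pi.smul_apply, smul_eq_mul] at this
      rw [← this, vd_cs]
      ring
    · have := congrFun hcomb (Fin.last n)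
      simp only [Pi.add_apply, Pi.smul_apply, smul_eq_mul] at this
      rw [← this, vd_last]
      have hτ' : τ = 1 - σ := by linarith
      rw [hτ']
  -- last coordinate of a is < d
  have haL : a (Fin.last n) < d := by
    obtain ⟨σ, hσ0, hσ1, hcs, hlast⟩ := hsegdata p1 hp1A hp1ne
    by_contra hcon
    push_neg at hcon
    have : (d:ℝ) ≤ p1 (Fin.last n) := by
      rw [hlast]
      nlinarith
    linarith
  have hdaL : (0:ℝ) < (d:ℝ) - a (Fin.last n) := by linarith
  -- common projection
  have hcommon : ∀ p ∈ A, p ≠ embed2 (0 : Fin n →₀ ℕ) d → prm d p = prm d a := by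
    intro p hpA hpne
    obtain ⟨σ, hσ0, hσ1, hcs, hlast⟩ := hsegdata p hpA hpne
    have hkey : (d:ℝ) - p (Fin.last n) = σ * ((d:ℝ) - a (Fin.last n)) := by
      rw [hlast]; ring
    funext i
    show ((d:ℝ) / ((d:ℝ) - p (Fin.last n))) * p i.castSucc
      = ((d:ℝ) / ((d:ℝ) - a (Fin.last n))) * a i.castSucc
    rw [hkey, hcs i]
    field_simp
  set v := prm d a with hvdef
  have hp1prm : prm d p1 = v := hcommon p1 hp1A hp1ne
  have hvQ : v ∈ prm d '' (P \ {embed2 (0 : Fin n →₀ ℕ) d}) :=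
    ⟨p1, ⟨hp1A.1, fun h => hp1ne h⟩, hp1prm⟩
  -- the head of ξ is minimized on Q exactly at v with value m
  have hQmin : ∀ q ∈ prm d '' (P \ {embed2 (0 : Fin n →₀ ℕ) d}),
      m ≤ dotp (fun i => ξ i.castSucc) q := by
    rintro q ⟨p, ⟨hpP, hpne⟩, rfl⟩
    have hk := (hPoth p hpP (fun h => hpne h)).1
    have hdiff := lift_diff hd hk (fun i => ξ i.castSucc) m
    rw [← hsnoc] at hdiff
    have ht : 0 < ((d:ℝ) - p (Fin.last n))/d := div_pos (by linarith) hd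
    have hge := hmmin p hpP
    nlinarith
  have hvval : dotp (fun i => ξ i.castSucc) v = m := by
    have hk := (hPoth p1 hp1A.1 hp1ne).1
    have hdiff := lift_diff hd hk (fun i => ξ i.castSucc) m
    rw [← hsnoc] at hdiff
    have ht : 0 < ((d:ℝ) - p1 (Fin.last n))/d := div_pos (by linarith) hd
    rw [hp1A.2, sub_self] at hdiff
    rw [← hp1prm]
    rcases mul_eq_zero.1 hdiff.symm with h | h
    · exact absurd h ht.ne'
    · linarith
  have hQuniq : ∀ q ∈ prm d '' (P \ {embed2 (0 : Fin n →₀ ℕ) d}),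
      dotp (fun i => ξ i.castSucc) q = m → q = v := by
    rintro q ⟨p, ⟨hpP, hpne⟩, rfl⟩ hval
    have hk := (hPoth p hpP (fun h => hpne h)).1
    have hdiff := lift_diff hd hk (fun i => ξ i.castSucc) m
    rw [← hsnoc] at hdiff
    rw [hval, sub_self, mul_zero] at hdiff
    have hpA : p ∈ A := ⟨hpP, by linarith⟩
    exact hcommon p hpA (fun h => hpne h)
  -- now suppose (C) fails for v
  refine ⟨v, hvQ, ?_⟩
  by_contra hcon
  push_neg at hcon
  obtain ⟨q0, hq0Q, i0, hq0i⟩ := hcon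
  have hQd := Qdisc hPnat hPoth
  have hξihpos : ∀ i : Fin n, 0 < ξ i.castSucc := fun i => hξpos i.castSucc
  obtain ⟨ζs, hζspos, hζsmin, u, huQ, hune, huval⟩ :=
    perturb (Nat.factorial_pos d) hQd hξihpos hvQ
      (fun q hq => by rw [hvval]; exact hQmin q hq)
      (fun q hq hval => hQuniq q hq (by rw [← hvval]; exact hval))
      hq0Q hq0i
  -- positive minimum value
  have hQnn : ∀ q ∈ prm d '' (P \ {embed2 (0 : Fin n →₀ ℕ) d}), ∀ i, 0 ≤ q i := by
    intro q hq i
    obtain ⟨mm, hmm⟩ := hQd q hq i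
    rw [hmm]; positivity
  have hvnn : ∀ i, 0 ≤ v i := hQnn v hvQ
  have hμpos : 0 < dotp ζs v := by
    have hv1 : 0 < v i1 := by
      rw [← hp1prm]
      show 0 < ((d:ℝ) / ((d:ℝ) - p1 (Fin.last n))) * p1 i1.castSucc
      obtain ⟨mm, hmm⟩ := hPnat p1 hp1A.1 i1.castSucc
      have hmm0 : mm ≠ 0 := fun h => hi1 (by rw [hmm, h]; norm_num)
      have h1 : 0 < (d:ℝ) - p1 (Fin.last n) := by linarith
      have h2 : 0 < p1 i1.castSucc := by
        rw [hmm]; exact_mod_cast Nat.pos_of_ne_zero hmm0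
      positivity
    have hterm : ζs i1 * v i1 ≤ dotp ζs v := by
      show ζs i1 * v i1 ≤ ∑ j, ζs j * v j
      exact Finset.single_le_sum (fun j _ => mul_nonneg (hζspos j).le (hvnn j))
        (Finset.mem_univ i1)
    nlinarith [hζspos i1]
  set μs := dotp ζs v with hμsdef
  -- lift ζs
  obtain ⟨hminPG, hiffG⟩ := min_lift hPoth hd (fun q hq => hζsmin q hq)
  set ξG : Fin (n+1) → ℝ := Fin.snoc ζs (μs/d) with hξGdef
  have hξGpos : ∀ i, 0 < ξG i := snoc_pos hζspos (by positivity)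
  set AG := {p ∈ P | dotp ξG p = μs} with hAGdef
  have hAGfin : AG.Finite := by
    refine Set.Finite.subset (finite_bdd Nat.one_pos hPdisc hξGpos μs) ?_
    rintro p ⟨hpP, hpval⟩
    exact ⟨hpP, le_of_eq hpval⟩
  have hGface : NPface (hullP P) ξG = convexHull ℝ AG :=
    NPface_hullP_eq hξGpos hminPG ⟨_, hv0, dotp_snoc_vtx hd ζs μs⟩
  -- A ⊆ AG
  have hAsubAG : A ⊆ AG := by
    intro p hpA
    by_cases hpne : p = embed2 (0 : Fin n →₀ ℕ) d
    · rw [hpne]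
      exact ⟨hv0, dotp_snoc_vtx hd ζs μs⟩
    · refine ⟨hpA.1, (hiffG p hpA.1 hpne).2 ?_⟩
      rw [hcommon p hpA hpne]
  -- u gives a point of AG off the ray towards v
  obtain ⟨pu, hpumem, hpuprm⟩ := huQ
  obtain ⟨hpuP, hpune⟩ := hpumem
  have hpuAG : pu ∈ AG := by
    refine ⟨hpuP, (hiffG pu hpuP (fun h => hpune h)).2 ?_⟩
    rw [hpuprm]
    exact huval
  -- dimension bound
  have hvtG : embed2 (0 : Fin n →₀ ℕ) d ∈ convexHull ℝ AG :=
    subset_convexHull ℝ _ (hAsubAG hvtA)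
  have hp1G : p1 ∈ convexHull ℝ AG := subset_convexHull ℝ _ (hAsubAG hp1A)
  have hpuG : pu ∈ convexHull ℝ AG := subset_convexHull ℝ _ hpuAG
  have hp1ray : p1 - embed2 (0 : Fin n →₀ ℕ) d
      = (((d:ℝ) - p1 (Fin.last n))/d) • uvec d v := by
    have hkey := ray_param hd hp1k
    rw [hp1prm] at hkey
    nth_rewrite 1 [hkey]
    abel
  have hpuk := (hPoth pu hpuP (fun h => hpune h)).1
  have hpuray : pu - embed2 (0 : Fin n →₀ ℕ) d
      = (((d:ℝ) - pu (Fin.last n))/d) • uvec d u := by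
    have hkey := ray_param hd hpuk
    rw [hpuprm] at hkey
    nth_rewrite 1 [hkey]
    abel
  have hli : LinearIndependent ℝ
      ![p1 - embed2 (0 : Fin n →₀ ℕ) d, pu - embed2 (0 : Fin n →₀ ℕ) d] := by
    rw [hp1ray, hpuray]
    exact li_rays hd (fun h => hune h.symm) (div_pos (by linarith) hd)
      (div_pos (by linarith) hd)
  have hdim : 2 ≤ npDim (convexHull ℝ AG) := two_le_npDim hvtG hp1G hpuG hli
  -- contradiction with looseness
  refine hloose (convexHull ℝ AG) ⟨ξG, fun i => (hξGpos i).le, hGface.symm⟩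
    (hAGfin.isCompact_convexHull (𝕜 := ℝ)) hdim ?_
  rw [hEconv]
  exact convexHull_mono hAsubAG

end Aux10

/-- a monic Weierstrass polynomial of degree `d` has an orthant
associated polyhedron iff its Newton polyhedron has a loose edge with endpoint
`(0,…,0,d)`. -/
theorem orthant_iff_loose_edge {K : Type*} [Field K] {n : ℕ}
    (f : Polynomial (MvPowerSeries (Fin n) K)) (d : ℕ)
    (hmonic : f.Monic) (hdeg : f.natDegree = d)
    (hW : ∀ j < d, MvPowerSeries.constantCoeff (f.coeff j) = 0)
    (projΔ : Set (Fin n → ℝ))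
    (hproj : projΔ = {x | ∃ y ∈ convexHull ℝ {p : Fin n → ℝ |
        ∃ (j : ℕ) (α : Fin n →₀ ℕ), j < d ∧ MvPowerSeries.coeff α (f.coeff j) ≠ 0 ∧
          p = fun i => ((d : ℝ) / ((d : ℝ) - (j : ℝ))) * (α i : ℝ)},
      ∃ z : Fin n → ℝ, (∀ i, 0 ≤ z i) ∧ x = y + z}) :
    (∃! v, IsVertexOf projΔ v) ↔
      ∃ (E : Set (Fin (n+1) → ℝ)) (a : Fin (n+1) → ℝ),
        IsLooseEdge (npOfPoly f) E ∧ a ≠ embed2 0 d ∧ E = segment ℝ a (embed2 0 d) := by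
  classical
  set P : Set (Fin (n+1) → ℝ) :=
    {p | ∃ (j : ℕ) (α : Fin n →₀ ℕ),
      MvPowerSeries.coeff α (f.coeff j) ≠ 0 ∧ p = embed2 α j} with hPdef
  have hnp : npOfPoly f = hullP P := rfl
  have hPnat : ∀ p ∈ P, ∀ i, ∃ m : ℕ, p i = (m:ℝ) := by
    rintro p ⟨j, α, hc, rfl⟩ i
    unfold embed2
    by_cases h : (i:ℕ) < n
    · exact ⟨α ⟨i, h⟩, by simp [h]⟩
    · exact ⟨j, by simp [h]⟩
  have hcd : f.coeff d = 1 := by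
    have := hmonic.coeff_natDegree
    rwa [hdeg] at this
  have hv0P : embed2 (0 : Fin n →₀ ℕ) d ∈ P := by
    refine ⟨d, 0, ?_, rfl⟩
    rw [hcd]
    simp [MvPowerSeries.coeff_zero_eq_constantCoeff_apply]
  have hjlt : ∀ (j : ℕ) (α : Fin n →₀ ℕ), MvPowerSeries.coeff α (f.coeff j) ≠ 0 →
      embed2 α j ≠ embed2 (0 : Fin n →₀ ℕ) d → j < d := by
    intro j α hc hne
    rcases lt_or_ge j d with h | h
    · exact h
    rcases eq_or_lt_of_le h with h' | h'
    · exfalso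
      rw [← h', hcd] at hc
      have hα : α = 0 := by
        by_contra hα
        apply hc
        rw [MvPowerSeries.coeff_one]
        simp [hα]
      apply hne
      rw [hα, ← h']
    · exfalso
      apply hc
      have : f.coeff j = 0 :=
        Polynomial.coeff_eq_zero_of_natDegree_lt (by rw [hdeg]; exact h')
      rw [this]
      simp
  have hPoth : ∀ p ∈ P, p ≠ embed2 (0 : Fin n →₀ ℕ) d →
      p (Fin.last n) < (d:ℝ) ∧ ∃ i : Fin n, p i.castSucc ≠ 0 := by
    rintro p ⟨j, α, hc, rfl⟩ hne
    have hj := hjlt j α hc hne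
    constructor
    · rw [embed2_last]; exact_mod_cast hj
    · have hα : α ≠ 0 := by
        intro hzero
        apply hc
        rw [hzero, MvPowerSeries.coeff_zero_eq_constantCoeff_apply]
        exact hW j hj
      obtain ⟨i, hi⟩ : ∃ i, α i ≠ 0 := by
        by_contra hcon
        push_neg at hcon
        exact hα (Finsupp.ext hcon)
      refine ⟨i, ?_⟩
      rw [embed2_cs]
      exact_mod_cast hi
  have hQset : {p : Fin n → ℝ | ∃ (j : ℕ) (α : Fin n →₀ ℕ), j < d ∧
        MvPowerSeries.coeff α (f.coeff j) ≠ 0 ∧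
        p = fun i => ((d:ℝ)/((d:ℝ)-(j:ℝ))) * (α i : ℝ)}
      = prm d '' (P \ {embed2 (0 : Fin n →₀ ℕ) d}) := by
    ext q
    constructor
    · rintro ⟨j, α, hj, hc, rfl⟩
      refine ⟨embed2 α j, ⟨⟨j, α, hc, rfl⟩, ?_⟩, ?_⟩
      · intro hmem
        have he := congrFun (Set.mem_singleton_iff.1 hmem) (Fin.last n)
        rw [embed2_last, embed2_last] at he
        have : j = d := by exact_mod_cast he
        omega
      · funext i
        show ((d:ℝ) / ((d:ℝ) - embed2 α j (Fin.last n))) * embed2 α j i.castSucc = _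
        rw [embed2_last, embed2_cs]
    · rintro ⟨p, ⟨⟨j, α, hc, hpeq⟩, hne⟩, rfl⟩
      subst hpeq
      have hj := hjlt j α hc (fun h => hne h)
      refine ⟨j, α, hj, hc, ?_⟩
      funext i
      show ((d:ℝ) / ((d:ℝ) - embed2 α j (Fin.last n))) * embed2 α j i.castSucc = _
      rw [embed2_last, embed2_cs]
  have hproj2 : projΔ = hullP (prm d '' (P \ {embed2 (0 : Fin n →₀ ℕ) d})) := by
    rw [hproj]
    show hullP _ = _
    rw [hQset]
  rw [hproj2, hnp]
  constructor
  · intro h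
    obtain ⟨v, hvQ, hdom⟩ := C_of_vertex (Nat.factorial_pos d) (Qdisc hPnat hPoth) h
    exact loose_of_C hPnat hv0P hPoth hvQ hdom
  · intro h
    obtain ⟨v, hvQ, hdom⟩ := C_of_loose hPnat hv0P hPoth h
    exact vertex_of_C hvQ hdom
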